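/- arXiv:1704.04252 — 8 statements merged into one kernel-verified Lean document; each statement's English description precedes it below -/
import Mathlib

section
/- Let A = [A_{i,j}]_{i,j∈ℕ} be the transition matrix of an irreducible Markov chain with countable state space, i.e. an irreducible stochastic matrix, acting as a bounded linear operator on the space c of convergent complex sequences. Then A is not supercyclic on c: for every y ∈ c, the projective orbit {λ A^n y : λ ∈ ℂ, n ∈ ℕ} is not dense in c. -/
open Filter

/-- Action of an infinite matrix `A` on a complex sequence: `(A x)_i = ∑_j A_{i,j} x_j`. -/
noncomputable def matAct (A : ℕ → ℕ → ℝ) (x : ℕ → ℂ) : ℕ → ℂ :=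
  fun i => ∑' j, (A i j : ℂ) * x j

/-- Entries of the `n`-th matrix power of `A`. -/
noncomputable def matPow (A : ℕ → ℕ → ℝ) : ℕ → ℕ → ℕ → ℝ
  | 0, i, j => if i = j then 1 else 0
  | n + 1, i, j => ∑' k, A i k * matPow A n k j

lemma matAct_contract (A : ℕ → ℕ → ℝ) (hpos : ∀ i j, 0 ≤ A i j)
    (hrow : ∀ i, HasSum (fun j => A i j) 1)
    (x : ℕ → ℂ) (c : ℂ) (s : ℝ) (hx : ∀ j, ‖x j - c‖ ≤ s) (i : ℕ) :
    ‖matAct A x i - c‖ ≤ s := by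
  have hnormA : ∀ j, ‖((A i j : ℝ) : ℂ)‖ = A i j := by
    intro j
    rw [Complex.norm_real, Real.norm_eq_abs, abs_of_nonneg (hpos i j)]
  have hrowC : HasSum (fun j => ((A i j : ℝ) : ℂ)) 1 := by
    simpa using (hrow i).mapL Complex.ofRealCLM
  have hbound : ∀ j, ‖(A i j : ℂ) * (x j - c)‖ ≤ A i j * s := by
    intro j
    rw [norm_mul, hnormA]
    exact mul_le_mul_of_nonneg_left (hx j) (hpos i j)
  have hsumAs : Summable (fun j => A i j * s) := (hrow i).summable.mul_right s
  have hsum_d : Summable (fun j => (A i j : ℂ) * (x j - c)) :=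
    Summable.of_norm_bounded hsumAs hbound
  have hsum_c : HasSum (fun j => (A i j : ℂ) * c) c := by
    simpa using hrowC.mul_right c
  have hsum_x : Summable (fun j => (A i j : ℂ) * x j) := by
    have heq : (fun j => (A i j : ℂ) * x j)
        = fun j => (A i j : ℂ) * (x j - c) + (A i j : ℂ) * c := by
      ext j; ring
    rw [heq]
    exact hsum_d.add hsum_c.summable
  have heq : matAct A x i - c = ∑' j, (A i j : ℂ) * (x j - c) := by
    unfold matAct
    calc (∑' j, (A i j : ℂ) * x j) - c
        = (∑' j, (A i j : ℂ) * x j) - ∑' j, (A i j : ℂ) * c := by rw [hsum_c.tsum_eq]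
      _ = ∑' j, ((A i j : ℂ) * x j - (A i j : ℂ) * c) := (Summable.tsum_sub hsum_x hsum_c.summable).symm
      _ = ∑' j, (A i j : ℂ) * (x j - c) := by
          apply tsum_congr; intro j; ring
  rw [heq]
  have hsum_norms : Summable (fun j => ‖(A i j : ℂ) * (x j - c)‖) :=
    Summable.of_nonneg_of_le (fun j => norm_nonneg _) hbound hsumAs
  calc ‖∑' j, (A i j : ℂ) * (x j - c)‖
      ≤ ∑' j, ‖(A i j : ℂ) * (x j - c)‖ := norm_tsum_le_tsum_norm hsum_norms
    _ ≤ ∑' j, A i j * s := Summable.tsum_le_tsum hbound hsum_norms hsumAs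
    _ = 1 * s := ((hrow i).mul_right s).tsum_eq
    _ = s := one_mul s

/-- A transition operator of an irreducible Markov chain with countable state space
(an irreducible stochastic matrix) is not supercyclic on the space `c` of convergent
complex sequences (with the sup norm): for every `y ∈ c`, the projective orbit
`{λ A^n y : λ ∈ ℂ, n ∈ ℕ}` is not dense in `c`. -/
theorem stmt0 (A : ℕ → ℕ → ℝ)
    (hpos : ∀ i j, 0 ≤ A i j)
    (hrow : ∀ i, HasSum (fun j => A i j) 1)
    (hirr : ∀ i j, ∃ n, 0 < matPow A n i j)
    (y : ℕ → ℂ) (hy : ∃ l, Tendsto y atTop (nhds l)) :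
    ¬ (∀ z : ℕ → ℂ, (∃ l, Tendsto z atTop (nhds l)) → ∀ ε : ℝ, 0 < ε →
        ∃ (lam : ℂ) (n : ℕ), ∀ i, ‖lam * (matAct A)^[n] y i - z i‖ < ε) := by
  intro H
  -- Step 1: approximate the constant sequence 1
  obtain ⟨lam0, n0, h1⟩ := H (fun _ => 1) ⟨1, tendsto_const_nhds⟩ (1/8) (by norm_num)
  -- Step 2: propagate along iterations (A fixes 1 and contracts around constants)
  have hfix : ∀ t i, ‖lam0 * (matAct A)^[n0 + t] y i - 1‖ ≤ 1/8 := by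
    intro t
    induction t with
    | zero => intro i; simpa using (h1 i).le
    | succ t ih =>
      intro i
      have hstep : (matAct A)^[n0 + (t+1)] y = matAct A ((matAct A)^[n0 + t] y) := by
        rw [show n0 + (t+1) = (n0 + t) + 1 by ring, Function.iterate_succ_apply']
      rw [hstep]
      set x := (matAct A)^[n0 + t] y with hxdef
      have hmul : lam0 * matAct A x i = matAct A x i * lam0 := mul_comm _ _
      have key := matAct_contract A hpos hrow (fun j => lam0 * x j) 1 (1/8) ih i
      have heq : matAct A (fun j => lam0 * x j) i = lam0 * matAct A x i := by
        unfold matAct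
        rw [← tsum_mul_left]
        apply tsum_congr; intro j; ring
      rwa [heq] at key
  -- Define the third coordinate constant
  set c : ℕ → ℝ := fun m => ‖(matAct A)^[m] y 2‖ / ‖(matAct A)^[m] y 0‖ with hcdef
  have hcnn : ∀ m, 0 ≤ c m := fun m => div_nonneg (norm_nonneg _) (norm_nonneg _)
  set R : ℝ := 1 + 2 * ∑ m ∈ Finset.range n0, c m with hRdef
  have hRge : ∀ m < n0, 1 + 2 * c m ≤ R := by
    intro m hm
    have : c m ≤ ∑ k ∈ Finset.range n0, c k :=
      Finset.single_le_sum (fun k _ => hcnn k) (Finset.mem_range.mpr hm)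
    simp only [hRdef]; linarith
  have hR1 : 1 ≤ R := by
    have : (0:ℝ) ≤ ∑ m ∈ Finset.range n0, c m :=
      Finset.sum_nonneg (fun k _ => hcnn k)
    simp only [hRdef]; linarith
  -- The target sequence z
  set z : ℕ → ℂ := fun i => if i = 0 then 1 else if i = 1 then -1 else if i = 2 then (R:ℂ) else 0
    with hzdef
  have hz : Tendsto z atTop (nhds 0) := by
    apply Tendsto.congr' _ tendsto_const_nhds
    filter_upwards [eventually_ge_atTop 3] with i hi
    simp only [hzdef]
    rw [if_neg (by omega), if_neg (by omega), if_neg (by omega)]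
  obtain ⟨lam, n, hzn⟩ := H z ⟨0, hz⟩ (1/2) (by norm_num)
  set v := (matAct A)^[n] y with hvdef
  have h0 : ‖lam * v 0 - 1‖ < 1/2 := by simpa [hzdef] using hzn 0
  have h1' : ‖lam * v 1 + 1‖ < 1/2 := by
    simpa [hzdef, sub_neg_eq_add] using hzn 1
  have h2 : ‖lam * v 2 - (R:ℂ)‖ < 1/2 := by
    simpa [hzdef] using hzn 2
  rcases lt_or_ge n n0 with hn | hn
  · -- early times: use coordinate 2
    have hv0 : v 0 ≠ 0 := by
      intro h
      rw [h, mul_zero, zero_sub, norm_neg, norm_one] at h0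
      norm_num at h0
    have hcm : ‖v 2‖ = c n * ‖v 0‖ := by
      have h : ‖v 0‖ ≠ 0 := norm_ne_zero_iff.mpr hv0
      rw [hcdef]
      exact (div_mul_cancel₀ _ h).symm
    have hA : ‖lam * v 0‖ ≤ 3/2 := by
      calc ‖lam * v 0‖ ≤ ‖lam * v 0 - 1‖ + ‖(1:ℂ)‖ := by
            simpa using norm_add_le (lam * v 0 - 1) 1
        _ ≤ 1/2 + 1 := by rw [norm_one]; linarith
        _ = 3/2 := by norm_num
    have hB : R - 1/2 ≤ ‖lam * v 2‖ := by
      have h : ‖((R:ℝ):ℂ)‖ - ‖lam * v 2‖ ≤ ‖((R:ℝ):ℂ) - lam * v 2‖ := norm_sub_norm_le _ _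
      rw [norm_sub_rev] at h
      have hnR : ‖((R:ℝ):ℂ)‖ = R := by
        rw [Complex.norm_real, Real.norm_eq_abs, abs_of_nonneg (by linarith)]
      linarith
    have hC : ‖lam * v 2‖ = ‖lam * v 0‖ * c n := by
      rw [norm_mul, norm_mul, hcm]; ring
    have hcn := hcnn n
    have hRn := hRge n hn
    nlinarith [norm_nonneg (lam * v 0)]
  · -- late times: iterates are projectively close to the constant 1
    have hv01 : v = (matAct A)^[n0 + (n - n0)] y := by
      rw [hvdef]; congr 1; omega
    have hf0 : ‖lam0 * v 0 - 1‖ ≤ 1/8 := by rw [hv01]; exact hfix (n - n0) 0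
    have hf1 : ‖lam0 * v 1 - 1‖ ≤ 1/8 := by rw [hv01]; exact hfix (n - n0) 1
    have hd : ‖lam0‖ * ‖v 0 - v 1‖ ≤ 1/4 := by
      have : lam0 * (v 0 - v 1) = (lam0 * v 0 - 1) - (lam0 * v 1 - 1) := by ring
      calc ‖lam0‖ * ‖v 0 - v 1‖ = ‖lam0 * (v 0 - v 1)‖ := (norm_mul _ _).symm
        _ = ‖(lam0 * v 0 - 1) - (lam0 * v 1 - 1)‖ := by rw [this]
        _ ≤ ‖lam0 * v 0 - 1‖ + ‖lam0 * v 1 - 1‖ := norm_sub_le _ _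
        _ ≤ 1/4 := by linarith
    have he : 7/8 ≤ ‖lam0‖ * ‖v 1‖ := by
      have h := norm_sub_norm_le (1:ℂ) (lam0 * v 1)
      rw [norm_sub_rev, norm_one, norm_mul] at h
      linarith
    have hf : ‖lam‖ * ‖v 1‖ ≤ 3/2 := by
      have : ‖lam * v 1‖ ≤ ‖lam * v 1 + 1‖ + ‖(1:ℂ)‖ := by
        simpa using norm_add_le (lam * v 1 + 1) (-1)
      rw [norm_one, norm_mul] at this
      linarith
    have hg : 1 ≤ ‖lam‖ * ‖v 0 - v 1‖ := by
      have heq : lam * (v 0 - v 1) = (lam * v 0 - 1) - (lam * v 1 + 1) + 2 := by ring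
      have h2' : ‖(2:ℂ)‖ = 2 := by norm_num
      have h3 : ‖(2:ℂ)‖ ≤ ‖(lam * v 0 - 1) - (lam * v 1 + 1) + 2‖
          + ‖(lam * v 0 - 1) - (lam * v 1 + 1)‖ := by
        have h5 := norm_add_le ((lam * v 0 - 1) - (lam * v 1 + 1) + 2)
          (-((lam * v 0 - 1) - (lam * v 1 + 1)))
        rw [norm_neg] at h5
        have h6 : (lam * v 0 - 1) - (lam * v 1 + 1) + 2
            + -((lam * v 0 - 1) - (lam * v 1 + 1)) = 2 := by ring
        rwa [h6] at h5
      have h4 : ‖(lam * v 0 - 1) - (lam * v 1 + 1)‖ ≤ ‖lam * v 0 - 1‖ + ‖lam * v 1 + 1‖ :=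
        norm_sub_le _ _
      rw [← norm_mul, heq]
      linarith [h2', h3, h4]
    have p1 : (‖lam0‖ * ‖v 0 - v 1‖) * (‖lam‖ * ‖v 1‖) ≤ (1/4) * (3/2) :=
      mul_le_mul hd hf (by positivity) (by norm_num)
    have p2 : 1 * (7/8) ≤ (‖lam‖ * ‖v 0 - v 1‖) * (‖lam0‖ * ‖v 1‖) :=
      mul_le_mul hg he (by norm_num) (by positivity)
    have peq : (‖lam0‖ * ‖v 0 - v 1‖) * (‖lam‖ * ‖v 1‖)
        = (‖lam‖ * ‖v 0 - v 1‖) * (‖lam0‖ * ‖v 1‖) := by ring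
    linarith
end

section
/- Let A = [A_{i,j}]_{i,j∈ℕ} be an irreducible stochastic matrix which is positive recurrent, i.e. there exists an invariant probability vector u ∈ l^1 (u_i ≥ 0, Σ_i u_i = 1, and Σ_i u_i A_{i,j} = u_j for every j). Then A, acting as a bounded linear operator on c_0, is not supercyclic on c_0. -/
open Filter

/-- Summability of a probability-weighted bounded sequence. -/
lemma aux_summable_weighted {u : ℕ → ℝ} (hu : Summable u) (hu_nn : ∀ i, 0 ≤ u i)
    {x : ℕ → ℂ} {C : ℝ} (hx : ∀ i, ‖x i‖ ≤ C) :
    Summable (fun i => (u i : ℂ) * x i) := by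
  apply Summable.of_norm
  apply Summable.of_nonneg_of_le (fun i => norm_nonneg _) (fun i => ?_) (hu.mul_right C)
  rw [norm_mul, Complex.norm_real, Real.norm_of_nonneg (hu_nn i)]
  exact mul_le_mul_of_nonneg_left (hx i) (hu_nn i)

/-- Norm bound on a probability-weighted sum of a bounded sequence. -/
lemma aux_norm_phi_le {u : ℕ → ℝ} (hu_nn : ∀ i, 0 ≤ u i) (hu_sum : HasSum u 1)
    {v : ℕ → ℂ} {ε : ℝ} (hv : ∀ i, ‖v i‖ ≤ ε) :
    ‖∑' i, (u i : ℂ) * v i‖ ≤ ε := by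
  have hb : ∀ i, ‖(u i : ℂ) * v i‖ ≤ u i * ε := fun i => by
    rw [norm_mul, Complex.norm_real, Real.norm_of_nonneg (hu_nn i)]
    exact mul_le_mul_of_nonneg_left (hv i) (hu_nn i)
  have hsn : Summable (fun i => ‖(u i : ℂ) * v i‖) :=
    Summable.of_nonneg_of_le (fun i => norm_nonneg _) hb (hu_sum.summable.mul_right ε)
  calc ‖∑' i, (u i : ℂ) * v i‖ ≤ ∑' i, ‖(u i : ℂ) * v i‖ := norm_tsum_le_tsum_norm hsn
    _ ≤ ∑' i, u i * ε := Summable.tsum_le_tsum hb hsn (hu_sum.summable.mul_right ε)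
    _ = 1 * ε := by rw [tsum_mul_right, hu_sum.tsum_eq]
    _ = ε := one_mul ε

/-- `matAct` does not increase a sup-norm bound. -/
lemma aux_matAct_bound (A : ℕ → ℕ → ℝ) (hpos : ∀ i j, 0 ≤ A i j)
    (hrow : ∀ i, HasSum (fun j => A i j) 1) {x : ℕ → ℂ} {C : ℝ}
    (hx : ∀ j, ‖x j‖ ≤ C) (i : ℕ) : ‖matAct A x i‖ ≤ C :=
  aux_norm_phi_le (hpos i) (hrow i) hx

/-- Invariance of the functional `x ↦ ∑ᵢ uᵢ xᵢ` under `matAct A` for bounded `x`. -/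
lemma aux_phi_matAct (A : ℕ → ℕ → ℝ) (hpos : ∀ i j, 0 ≤ A i j)
    (hrow : ∀ i, HasSum (fun j => A i j) 1)
    (u : ℕ → ℝ) (hu_nn : ∀ i, 0 ≤ u i) (hu_sum : HasSum u 1)
    (hu_inv : ∀ j, HasSum (fun i => u i * A i j) (u j))
    (x : ℕ → ℂ) (C : ℝ) (hx : ∀ j, ‖x j‖ ≤ C) :
    ∑' i, (u i : ℂ) * matAct A x i = ∑' i, (u i : ℂ) * x i := by
  set f : ℕ → ℕ → ℂ := fun i j => (u i : ℂ) * ((A i j : ℂ) * x j) with hfdef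
  have hnorm : ∀ i j, ‖f i j‖ ≤ u i * A i j * C := by
    intro i j
    simp only [hfdef, norm_mul, Complex.norm_real, Real.norm_of_nonneg (hu_nn i),
      Real.norm_of_nonneg (hpos i j), ← mul_assoc]
    exact mul_le_mul_of_nonneg_left (hx j) (mul_nonneg (hu_nn i) (hpos i j))
  have hrowsum : ∀ i, Summable (f i) := fun i => by
    apply Summable.of_norm
    exact Summable.of_nonneg_of_le (fun j => norm_nonneg _) (hnorm i)
      (((hrow i).summable.mul_left (u i)).mul_right C)
  have hcolsum : ∀ j, Summable (fun i => f i j) := fun j => by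
    apply Summable.of_norm
    exact Summable.of_nonneg_of_le (fun i => norm_nonneg _) (fun i => hnorm i j)
      ((hu_inv j).summable.mul_right C)
  have hg : Summable (fun p : ℕ × ℕ => u p.1 * A p.1 p.2 * C) := by
    apply (summable_prod_of_nonneg ?_).2 ⟨?_, ?_⟩
    · intro p
      exact mul_nonneg (mul_nonneg (hu_nn p.1) (hpos p.1 p.2)) (le_trans (norm_nonneg _) (hx 0))
    · intro i
      exact ((hrow i).summable.mul_left (u i)).mul_right C
    · apply Summable.congr (hu_sum.summable.mul_right C)
      intro i
      dsimp only
      rw [tsum_mul_right, tsum_mul_left, (hrow i).tsum_eq, mul_one]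
  have hunc : Summable (Function.uncurry f) := by
    apply Summable.of_norm
    apply Summable.of_nonneg_of_le (fun p => norm_nonneg _) (fun p => ?_) hg
    exact hnorm p.1 p.2
  have hswap : ∑' j, ∑' i, f i j = ∑' i, ∑' j, f i j := Summable.tsum_comm' hunc hrowsum hcolsum
  have hL : ∑' i, (u i : ℂ) * matAct A x i = ∑' i, ∑' j, f i j := by
    refine tsum_congr fun i => ?_
    rw [matAct, ← tsum_mul_left]
  have hR : ∀ j, ∑' i, f i j = (u j : ℂ) * x j := by
    intro j
    have h1 : ∀ i, f i j = ((u i * A i j : ℝ) : ℂ) * x j := by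
      intro i; simp only [hfdef]; push_cast; ring
    rw [tsum_congr h1, tsum_mul_right, (Complex.hasSum_ofReal.mpr (hu_inv j)).tsum_eq]
  rw [hL, ← hswap, tsum_congr hR]

/-- An irreducible stochastic matrix which is positive recurrent (has an invariant
probability vector `u ∈ l¹`), acting as a bounded linear operator on `c₀`,
is not supercyclic on `c₀`: no `y ∈ c₀` has a projective orbit that is dense in `c₀`
(with respect to the sup norm). -/
theorem stmt1 (A : ℕ → ℕ → ℝ)
    (hpos : ∀ i j, 0 ≤ A i j)
    (hrow : ∀ i, HasSum (fun j => A i j) 1)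
    (hirr : ∀ i j, ∃ n, 0 < matPow A n i j)
    (u : ℕ → ℝ) (hu_nn : ∀ i, 0 ≤ u i) (hu_sum : HasSum u 1)
    (hu_inv : ∀ j, HasSum (fun i => u i * A i j) (u j))
    (hc0 : ∀ x : ℕ → ℂ, Tendsto x atTop (nhds 0) → Tendsto (matAct A x) atTop (nhds 0)) :
    ¬ ∃ y : ℕ → ℂ, Tendsto y atTop (nhds 0) ∧
        ∀ z : ℕ → ℂ, Tendsto z atTop (nhds 0) → ∀ ε : ℝ, 0 < ε →
          ∃ (lam : ℂ) (n : ℕ), ∀ i, ‖lam * (matAct A)^[n] y i - z i‖ < ε := by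
  rintro ⟨y, hy0, hy⟩
  -- a bound on ‖y‖
  obtain ⟨N, hN⟩ := Metric.tendsto_atTop.mp hy0 1 one_pos
  set C : ℝ := (∑ i ∈ Finset.range N, ‖y i‖) + 1 with hCdef
  have hsum_nn : 0 ≤ ∑ i ∈ Finset.range N, ‖y i‖ :=
    Finset.sum_nonneg fun i _ => norm_nonneg _
  have hC0 : 0 ≤ C := by positivity
  have hCy : ∀ i, ‖y i‖ ≤ C := by
    intro i
    by_cases hi : i < N
    · have := Finset.single_le_sum (f := fun i => ‖y i‖)
        (fun i _ => norm_nonneg _) (Finset.mem_range.mpr hi)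
      linarith
    · have := hN i (le_of_not_gt hi)
      rw [dist_zero_right] at this
      linarith
  set w : ℕ → ℕ → ℂ := fun n => (matAct A)^[n] y with hwdef
  have hw : ∀ n i, ‖w n i‖ ≤ C := by
    intro n
    induction n with
    | zero => simpa [hwdef] using hCy
    | succ n ih =>
      intro i
      have : w (n + 1) = matAct A (w n) := by
        simp [hwdef, Function.iterate_succ_apply']
      rw [this]
      exact aux_matAct_bound A hpos hrow ih i
  set c : ℂ := ∑' i, (u i : ℂ) * y i with hcdef
  have hφw : ∀ n, ∑' i, (u i : ℂ) * w n i = c := by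
    intro n
    induction n with
    | zero => simp [hwdef, hcdef]
    | succ n ih =>
      have h1 : w (n + 1) = matAct A (w n) := by
        simp [hwdef, Function.iterate_succ_apply']
      rw [h1, aux_phi_matAct A hpos hrow u hu_nn hu_sum hu_inv (w n) C (hw n), ih]
  -- the key approximation estimate
  have key : ∀ (z : ℕ → ℂ), Summable (fun i => (u i : ℂ) * z i) →
      ∀ (lam : ℂ) (n : ℕ) (ε : ℝ), (∀ i, ‖lam * w n i - z i‖ ≤ ε) →
      ‖lam * c - ∑' i, (u i : ℂ) * z i‖ ≤ ε := by
    intro z hz lam n ε hε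
    have hsw : Summable (fun i => (u i : ℂ) * (lam * w n i)) := by
      apply aux_summable_weighted hu_sum.summable hu_nn (C := ‖lam‖ * C)
      intro i
      rw [norm_mul]
      exact mul_le_mul_of_nonneg_left (hw n i) (norm_nonneg _)
    have hphi : ∑' i, (u i : ℂ) * (lam * w n i - z i) = lam * c - ∑' i, (u i : ℂ) * z i := by
      have h1 : (fun i => (u i : ℂ) * (lam * w n i - z i)) =
          fun i => (u i : ℂ) * (lam * w n i) - (u i : ℂ) * z i := by
        funext i; ring
      rw [h1, Summable.tsum_sub hsw hz]
      congr 1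
      have h2 : (fun i => (u i : ℂ) * (lam * w n i)) =
          fun i => lam * ((u i : ℂ) * w n i) := by funext i; ring
      rw [h2, tsum_mul_left, hφw n]
    rw [← hphi]
    exact aux_norm_phi_le hu_nn hu_sum hε
  -- some index with positive weight
  have hk : ∃ k, 0 < u k := by
    by_contra h
    push_neg at h
    have hz : u = 0 := funext fun i => le_antisymm (h i) (hu_nn i)
    rw [hz] at hu_sum
    have h10 := hu_sum.unique hasSum_zero
    norm_num at h10
  obtain ⟨k, hk⟩ := hk
  have hk' : (u k : ℂ) ≠ 0 := Complex.ofReal_ne_zero.mpr (ne_of_gt hk)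
  by_cases hc : c = 0
  · -- approximate a vector with φ z = 1
    set z : ℕ → ℂ := fun i => if i = k then (u k : ℂ)⁻¹ else 0 with hzdef
    have hz0 : Tendsto z atTop (nhds 0) := by
      apply Tendsto.congr' _ ((tendsto_const_nhds : Tendsto (fun _ : ℕ => (0:ℂ)) atTop (nhds 0)))
      filter_upwards [eventually_ge_atTop (k + 1)] with i hi
      simp only [hzdef]
      rw [if_neg (by omega : ¬ i = k)]
    have hzsum : Summable (fun i => (u i : ℂ) * z i) := by
      apply summable_of_ne_finset_zero (s := {k})
      intro i hi
      simp only [Finset.mem_singleton] at hi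
      simp [hzdef, hi]
    have hφz : ∑' i, (u i : ℂ) * z i = 1 := by
      rw [tsum_eq_single k (fun i hi => by simp [hzdef, hi])]
      simp [hzdef, hk']
    obtain ⟨lam, n, h⟩ := hy z hz0 (1/2) (by norm_num)
    have := key z hzsum lam n (1/2) (fun i => (h i).le)
    rw [hφz, hc, mul_zero, zero_sub, norm_neg, norm_one] at this
    norm_num at this
  · -- approximate a large vector with φ z = 0
    have hcpos : 0 < ‖c‖ := norm_pos_iff.mpr hc
    set M : ℝ := C / ‖c‖ + 2 with hMdef
    have hM0 : 0 ≤ M := by positivity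
    set zr : ℕ → ℝ := fun i =>
      if i = k + 1 then M else if i = k then -(M * u (k + 1) / u k) else 0 with hzrdef
    set z : ℕ → ℂ := fun i => (zr i : ℂ) with hzdef
    have hz0 : Tendsto z atTop (nhds 0) := by
      apply Tendsto.congr' _ ((tendsto_const_nhds : Tendsto (fun _ : ℕ => (0:ℂ)) atTop (nhds 0)))
      filter_upwards [eventually_ge_atTop (k + 2)] with i hi
      simp only [hzdef, hzrdef]
      rw [if_neg (by omega : ¬ i = k + 1), if_neg (by omega : ¬ i = k), Complex.ofReal_zero]
    have hzsum : Summable (fun i => (u i : ℂ) * z i) := by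
      apply summable_of_ne_finset_zero (s := {k, k + 1})
      intro i hi
      simp only [Finset.mem_insert, Finset.mem_singleton] at hi
      push_neg at hi
      simp [hzdef, hzrdef, hi.1, hi.2]
    have hφz : ∑' i, (u i : ℂ) * z i = 0 := by
      rw [tsum_eq_sum (s := {k, k + 1}) (by
        intro i hi
        simp only [Finset.mem_insert, Finset.mem_singleton] at hi
        push_neg at hi
        simp [hzdef, hzrdef, hi.1, hi.2])]
      rw [Finset.sum_pair (by omega : k ≠ k + 1)]
      simp only [hzdef, hzrdef, if_pos rfl, if_neg (by omega : ¬ k = k + 1)]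
      push_cast
      field_simp
      ring
    obtain ⟨lam, n, h⟩ := hy z hz0 1 one_pos
    have hkey := key z hzsum lam n 1 (fun i => (h i).le)
    rw [hφz, sub_zero, norm_mul] at hkey
    have hlam : ‖lam‖ ≤ 1 / ‖c‖ := by
      rw [le_div_iff₀ hcpos]; exact hkey
    have hz1 : z (k + 1) = (M : ℂ) := by simp [hzdef, hzrdef]
    have h1 := h (k + 1)
    rw [hz1] at h1
    have h1' : ‖lam * w n (k + 1) - (M : ℂ)‖ < 1 := h1
    have p4 : M - ‖lam * w n (k + 1)‖ ≤ ‖lam * w n (k + 1) - (M : ℂ)‖ := by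
      have : ‖(M : ℂ)‖ - ‖lam * w n (k + 1)‖ ≤ ‖(M : ℂ) - lam * w n (k + 1)‖ :=
        norm_sub_norm_le _ _
      rw [norm_sub_rev] at this
      rw [Complex.norm_real, Real.norm_of_nonneg hM0] at this
      exact this
    have p5 : ‖lam * w n (k + 1)‖ ≤ (1 / ‖c‖) * C := by
      rw [norm_mul]
      exact mul_le_mul hlam (hw n (k + 1)) (norm_nonneg _) (by positivity)
    have heq : (1 / ‖c‖) * C = C / ‖c‖ := by ring
    have hM2 : M = C / ‖c‖ + 2 := hMdef
    clear_value M
    linarith [p4, p5, heq, h1', hM2]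
end

section
/- Let q ≥ 1 and let A be an irreducible stochastic matrix which is positive recurrent, i.e. there exists an invariant probability vector u ∈ l^1 (u_i ≥ 0, Σ_i u_i = 1, Σ_i u_i A_{i,j} = u_j for every j), and suppose A acts as a bounded linear operator on l^q. Then A is not supercyclic on l^q. -/
open Filter

/-- Membership in `ℓ^q`: `∑ ‖x n‖^q < ∞`. -/
def memlq (q : ℝ) (x : ℕ → ℂ) : Prop := Summable (fun n => ‖x n‖ ^ q)

/-- The `q`-th power of the `ℓ^q` distance between `x` and `z` is `< ε`. -/
def distLqlt (q : ℝ) (x z : ℕ → ℂ) (ε : ℝ) : Prop := (∑' i, ‖x i - z i‖ ^ q) < ε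

/-- `T` is supercyclic on the space given by membership predicate `mem` with
distance predicate `dlt`. -/
def SupercyclicOn (mem : (ℕ → ℂ) → Prop) (dlt : (ℕ → ℂ) → (ℕ → ℂ) → ℝ → Prop)
    (T : (ℕ → ℂ) → (ℕ → ℂ)) : Prop :=
  ∃ x, mem x ∧ ∀ z, mem z → ∀ ε : ℝ, 0 < ε →
    ∃ (lam : ℂ) (n : ℕ), dlt (fun i => lam * T^[n] x i) z ε

/- ### Auxiliary lemmas -/

lemma rpow_add_le {q : ℝ} (hq : 1 ≤ q) {a b : ℝ} (ha : 0 ≤ a) (hb : 0 ≤ b) :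
    (a + b) ^ q ≤ 2 ^ q * (a ^ q + b ^ q) := by
  have h2 : a + b ≤ 2 * max a b := by
    rcases le_total a b with h | h
    · rw [max_eq_right h]; linarith
    · rw [max_eq_left h]; linarith
  have hm : 0 ≤ max a b := le_max_of_le_left ha
  calc (a + b) ^ q ≤ (2 * max a b) ^ q :=
        Real.rpow_le_rpow (by linarith) h2 (by linarith)
    _ = 2 ^ q * (max a b) ^ q := Real.mul_rpow (by norm_num) hm
    _ ≤ 2 ^ q * (a ^ q + b ^ q) := by
        have h3 : (max a b) ^ q ≤ a ^ q + b ^ q := by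
          rcases max_cases a b with ⟨h1, _⟩ | ⟨h1, _⟩ <;> rw [h1]
          · nlinarith [Real.rpow_nonneg hb q]
          · nlinarith [Real.rpow_nonneg ha q]
        exact mul_le_mul_of_nonneg_left h3 (Real.rpow_nonneg (by norm_num) q)

lemma memlq_sub {q : ℝ} (hq : 1 ≤ q) {x z : ℕ → ℂ} (hx : memlq q x) (hz : memlq q z) :
    memlq q (fun i => x i - z i) := by
  apply Summable.of_nonneg_of_le (fun n => Real.rpow_nonneg (norm_nonneg _) q)
    (fun n => ?_) ((hx.add hz).mul_left ((2:ℝ) ^ q))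
  calc ‖x n - z n‖ ^ q ≤ (‖x n‖ + ‖z n‖) ^ q :=
        Real.rpow_le_rpow (norm_nonneg _) (norm_sub_le _ _) (by linarith)
    _ ≤ 2 ^ q * (‖x n‖ ^ q + ‖z n‖ ^ q) := rpow_add_le hq (norm_nonneg _) (norm_nonneg _)

lemma memlq_smul {q : ℝ} {x : ℕ → ℂ} (hx : memlq q x) (c : ℂ) :
    memlq q (fun i => c * x i) := by
  have h : ∀ n, ‖c * x n‖ ^ q = ‖c‖ ^ q * ‖x n‖ ^ q := by
    intro n
    rw [norm_mul, Real.mul_rpow (norm_nonneg _) (norm_nonneg _)]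
  exact (hx.mul_left (‖c‖ ^ q)).congr (fun n => (h n).symm)

lemma norm_le_lqnorm {q : ℝ} (hq : 1 ≤ q) {x : ℕ → ℂ} (hx : memlq q x) (i : ℕ) :
    ‖x i‖ ≤ (∑' n, ‖x n‖ ^ q) ^ (1/q) := by
  have hq0 : (0:ℝ) < q := by linarith
  have h1 : ‖x i‖ ^ q ≤ ∑' n, ‖x n‖ ^ q :=
    Summable.le_tsum hx i (fun j _ => Real.rpow_nonneg (norm_nonneg _) q)
  have h2 := Real.rpow_le_rpow (Real.rpow_nonneg (norm_nonneg _) q) h1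
    (by positivity : (0:ℝ) ≤ 1/q)
  rwa [← Real.rpow_mul (norm_nonneg _), mul_one_div_cancel hq0.ne', Real.rpow_one] at h2

lemma sumN {q : ℝ} (hq : 1 ≤ q) {u : ℕ → ℝ} (hu_nn : ∀ i, 0 ≤ u i) (hu : Summable u)
    {x : ℕ → ℂ} (hx : memlq q x) : Summable (fun i => u i * ‖x i‖) :=
  Summable.of_nonneg_of_le (fun i => mul_nonneg (hu_nn i) (norm_nonneg _))
    (fun i => mul_le_mul_of_nonneg_left (norm_le_lqnorm hq hx i) (hu_nn i))
    (hu.mul_right _)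

lemma N_le_lq {q : ℝ} (hq : 1 ≤ q) {u : ℕ → ℝ} (hu_nn : ∀ i, 0 ≤ u i)
    (hu_sum : HasSum u 1) {x : ℕ → ℂ} (hx : memlq q x) :
    (∑' i, u i * ‖x i‖) ≤ (∑' n, ‖x n‖ ^ q) ^ (1/q) := by
  calc (∑' i, u i * ‖x i‖) ≤ ∑' i, u i * (∑' n, ‖x n‖ ^ q) ^ (1/q) :=
        Summable.tsum_le_tsum
          (fun i => mul_le_mul_of_nonneg_left (norm_le_lqnorm hq hx i) (hu_nn i))
          (sumN hq hu_nn hu_sum.summable hx) (hu_sum.summable.mul_right _)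
    _ = (∑' n, ‖x n‖ ^ q) ^ (1/q) := by rw [tsum_mul_right, hu_sum.tsum_eq, one_mul]

lemma normPhiTerm {u : ℕ → ℝ} (hu_nn : ∀ i, 0 ≤ u i) (y : ℕ → ℂ) (i : ℕ) :
    ‖(u i : ℂ) * y i‖ = u i * ‖y i‖ := by
  rw [norm_mul, Complex.norm_real, Real.norm_of_nonneg (hu_nn i)]

lemma sumPhi {q : ℝ} (hq : 1 ≤ q) {u : ℕ → ℝ} (hu_nn : ∀ i, 0 ≤ u i) (hu : Summable u)
    {x : ℕ → ℂ} (hx : memlq q x) : Summable (fun i => (u i : ℂ) * x i) := by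
  apply Summable.of_norm
  exact ((sumN hq hu_nn hu hx).congr (fun i => (normPhiTerm hu_nn x i).symm))

lemma normPhi_le {q : ℝ} (hq : 1 ≤ q) {u : ℕ → ℝ} (hu_nn : ∀ i, 0 ≤ u i) (hu : Summable u)
    {x : ℕ → ℂ} (hx : memlq q x) :
    ‖∑' i, (u i : ℂ) * x i‖ ≤ ∑' i, u i * ‖x i‖ := by
  calc ‖∑' i, (u i : ℂ) * x i‖ ≤ ∑' i, ‖(u i : ℂ) * x i‖ :=
        norm_tsum_le_tsum_norm
          ((sumN hq hu_nn hu hx).congr (fun i => (normPhiTerm hu_nn x i).symm))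
    _ = ∑' i, u i * ‖x i‖ := tsum_congr (fun i => normPhiTerm hu_nn x i)

lemma fubini_real (A : ℕ → ℕ → ℝ) (hpos : ∀ i j, 0 ≤ A i j)
    (hrow : ∀ i, HasSum (fun j => A i j) 1)
    (u : ℕ → ℝ) (hu_nn : ∀ i, 0 ≤ u i) (hu_sum : HasSum u 1)
    (hu_inv : ∀ j, HasSum (fun i => u i * A i j) (u j))
    (v : ℕ → ℝ) (hv_nn : ∀ j, 0 ≤ v j) {B : ℝ} (hv_bd : ∀ j, v j ≤ B) :
    (∀ i, Summable (fun j => A i j * v j)) ∧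
    Summable (fun i => u i * ∑' j, A i j * v j) ∧
    (∑' i, u i * ∑' j, A i j * v j) = ∑' j, u j * v j ∧
    Summable (Function.uncurry (fun i j => u i * (A i j * v j))) := by
  have hB : 0 ≤ B := le_trans (hv_nn 0) (hv_bd 0)
  have hrowS : ∀ i, Summable (fun j => A i j * v j) := fun i =>
    Summable.of_nonneg_of_le (fun j => mul_nonneg (hpos i j) (hv_nn j))
      (fun j => mul_le_mul_of_nonneg_left (hv_bd j) (hpos i j))
      ((hrow i).summable.mul_right B)
  have hrowsum_le : ∀ i, (∑' j, A i j * v j) ≤ B := by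
    intro i
    calc (∑' j, A i j * v j) ≤ ∑' j, A i j * B :=
          Summable.tsum_le_tsum (fun j => mul_le_mul_of_nonneg_left (hv_bd j) (hpos i j))
            (hrowS i) ((hrow i).summable.mul_right B)
      _ = B := by rw [tsum_mul_right, (hrow i).tsum_eq, one_mul]
  set f : ℕ → ℕ → ℝ := fun i j => u i * (A i j * v j) with hf
  have hf_rows : ∀ i, Summable (f i) := fun i => (hrowS i).mul_left (u i)
  have hf_cols : ∀ j, Summable (fun i => f i j) := by
    intro j
    refine ((hu_inv j).summable.mul_right (v j)).congr (fun i => ?_)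
    simp only [hf]; ring
  have hSum2 : Summable (fun i => u i * ∑' j, A i j * v j) :=
    Summable.of_nonneg_of_le
      (fun i => mul_nonneg (hu_nn i)
        (tsum_nonneg (fun j => mul_nonneg (hpos i j) (hv_nn j))))
      (fun i => mul_le_mul_of_nonneg_left (hrowsum_le i) (hu_nn i))
      (hu_sum.summable.mul_right B)
  have hG : Summable (Function.uncurry f) := by
    refine (summable_prod_of_nonneg ?_).mpr ⟨fun i => hf_rows i, ?_⟩
    · exact Pi.le_def.mpr (fun p => mul_nonneg (hu_nn p.1)
        (mul_nonneg (hpos p.1 p.2) (hv_nn p.2)))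
    · refine hSum2.congr (fun i => ?_)
      exact (tsum_mul_left).symm
  have hkey : (∑' j, ∑' i, f i j) = ∑' i, ∑' j, f i j := Summable.tsum_comm' hG hf_rows hf_cols
  refine ⟨hrowS, hSum2, ?_, hG⟩
  calc (∑' i, u i * ∑' j, A i j * v j) = ∑' i, ∑' j, f i j :=
        tsum_congr (fun i => tsum_mul_left.symm)
    _ = ∑' j, ∑' i, f i j := hkey.symm
    _ = ∑' j, u j * v j := by
        refine tsum_congr (fun j => ?_)
        have h1 : (∑' i, f i j) = (∑' i, u i * A i j) * v j := by
          rw [← tsum_mul_right]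
          exact tsum_congr (fun i => by simp only [hf]; ring)
        rw [h1, (hu_inv j).tsum_eq]

lemma phi_invariant (A : ℕ → ℕ → ℝ) (hpos : ∀ i j, 0 ≤ A i j)
    (hrow : ∀ i, HasSum (fun j => A i j) 1)
    (u : ℕ → ℝ) (hu_nn : ∀ i, 0 ≤ u i) (hu_sum : HasSum u 1)
    (hu_inv : ∀ j, HasSum (fun i => u i * A i j) (u j))
    (x : ℕ → ℂ) {B : ℝ} (hx_bd : ∀ j, ‖x j‖ ≤ B) :
    (∑' i, (u i : ℂ) * matAct A x i) = ∑' i, (u i : ℂ) * x i := by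
  obtain ⟨hrowS, hSum2, hfub, hG⟩ := fubini_real A hpos hrow u hu_nn hu_sum hu_inv
    (fun j => ‖x j‖) (fun j => norm_nonneg _) hx_bd
  set F : ℕ → ℕ → ℂ := fun i j => (u i : ℂ) * ((A i j : ℂ) * x j) with hF
  have hnormF : ∀ i j, ‖F i j‖ = u i * (A i j * ‖x j‖) := by
    intro i j
    simp only [hF, norm_mul, Complex.norm_real, Real.norm_of_nonneg (hu_nn i),
      Real.norm_of_nonneg (hpos i j)]
  have hFrows : ∀ i, Summable (F i) := by
    intro i
    apply Summable.of_norm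
    exact ((hrowS i).mul_left (u i)).congr (fun j => (hnormF i j).symm)
  have hFcols : ∀ j, Summable (fun i => F i j) := by
    intro j
    apply Summable.of_norm
    refine (((hu_inv j).summable.mul_right ‖x j‖).congr (fun i => ?_))
    rw [hnormF i j]; ring
  have hFsum : Summable (Function.uncurry F) := by
    apply Summable.of_norm
    exact hG.congr (fun p => (hnormF p.1 p.2).symm)
  calc (∑' i, (u i : ℂ) * matAct A x i) = ∑' i, ∑' j, F i j :=
        tsum_congr (fun i => tsum_mul_left.symm)
    _ = ∑' j, ∑' i, F i j := (Summable.tsum_comm' hFsum hFrows hFcols).symm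
    _ = ∑' j, (u j : ℂ) * x j := by
        refine tsum_congr (fun j => ?_)
        have h1 : (∑' i, F i j) = (∑' i, ((u i * A i j : ℝ) : ℂ)) * x j := by
          rw [← tsum_mul_right]
          refine tsum_congr (fun i => ?_)
          simp only [hF]; push_cast; ring
        have h2 : HasSum (fun i => ((u i * A i j : ℝ) : ℂ)) ((u j : ℝ) : ℂ) :=
          (hu_inv j).map Complex.ofRealHom.toAddMonoidHom Complex.continuous_ofReal
        rw [h1, h2.tsum_eq]

lemma N_decreasing (A : ℕ → ℕ → ℝ) (hpos : ∀ i j, 0 ≤ A i j)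
    (hrow : ∀ i, HasSum (fun j => A i j) 1)
    (u : ℕ → ℝ) (hu_nn : ∀ i, 0 ≤ u i) (hu_sum : HasSum u 1)
    (hu_inv : ∀ j, HasSum (fun i => u i * A i j) (u j))
    (x : ℕ → ℂ) {B : ℝ} (hx_bd : ∀ j, ‖x j‖ ≤ B) :
    (∑' i, u i * ‖matAct A x i‖) ≤ ∑' i, u i * ‖x i‖ := by
  obtain ⟨hrowS, hSum2, hfub, hG⟩ := fubini_real A hpos hrow u hu_nn hu_sum hu_inv
    (fun j => ‖x j‖) (fun j => norm_nonneg _) hx_bd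
  have hnorm_le : ∀ i, ‖matAct A x i‖ ≤ ∑' j, A i j * ‖x j‖ := by
    intro i
    calc ‖matAct A x i‖ ≤ ∑' j, ‖(A i j : ℂ) * x j‖ := by
          apply norm_tsum_le_tsum_norm
          refine (hrowS i).congr (fun j => ?_)
          rw [norm_mul, Complex.norm_real, Real.norm_of_nonneg (hpos i j)]
      _ = ∑' j, A i j * ‖x j‖ := tsum_congr (fun j => by
          rw [norm_mul, Complex.norm_real, Real.norm_of_nonneg (hpos i j)])
  have hLHS : Summable (fun i => u i * ‖matAct A x i‖) :=
    Summable.of_nonneg_of_le (fun i => mul_nonneg (hu_nn i) (norm_nonneg _))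
      (fun i => mul_le_mul_of_nonneg_left (hnorm_le i) (hu_nn i)) hSum2
  calc (∑' i, u i * ‖matAct A x i‖) ≤ ∑' i, u i * ∑' j, A i j * ‖x j‖ :=
        Summable.tsum_le_tsum (fun i => mul_le_mul_of_nonneg_left (hnorm_le i) (hu_nn i))
          hLHS hSum2
    _ = ∑' j, u j * ‖x j‖ := hfub

lemma exists_two_pos (A : ℕ → ℕ → ℝ) (hpos : ∀ i j, 0 ≤ A i j)
    (hrow : ∀ i, HasSum (fun j => A i j) 1)
    (hirr : ∀ i j, ∃ n, 0 < matPow A n i j)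
    (u : ℕ → ℝ) (hu_nn : ∀ i, 0 ≤ u i) (hu_sum : HasSum u 1)
    (hu_inv : ∀ j, HasSum (fun i => u i * A i j) (u j)) :
    ∃ k l, k ≠ l ∧ 0 < u k ∧ 0 < u l := by
  obtain ⟨k, hk⟩ : ∃ k, 0 < u k := by
    by_contra h
    push_neg at h
    have hz : ∀ i, u i = 0 := fun i => le_antisymm (h i) (hu_nn i)
    have h1 : (1 : ℝ) = 0 := by
      rw [← hu_sum.tsum_eq]
      simp [hz]
    norm_num at h1
  by_cases h2 : ∃ l, l ≠ k ∧ 0 < u l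
  · obtain ⟨l, hlk, hl⟩ := h2
    exact ⟨k, l, fun h => hlk h.symm, hk, hl⟩
  push_neg at h2
  exfalso
  have hz : ∀ j, j ≠ k → u j = 0 := fun j hj =>
    le_antisymm (not_lt.mp (fun h => (h2 j hj).not_gt h)) (hu_nn j)
  have hAk : ∀ j, j ≠ k → A k j = 0 := by
    intro j hj
    have h1 : u k * A k j ≤ ∑' i, u i * A i j :=
      Summable.le_tsum (hu_inv j).summable k (fun m _ => mul_nonneg (hu_nn m) (hpos m j))
    rw [(hu_inv j).tsum_eq, hz j hj] at h1
    nlinarith [mul_nonneg (hu_nn k) (hpos k j), hk]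
  have hAkk : A k k = 1 := by
    have h3 := (hrow k).tsum_eq
    rwa [tsum_eq_single k (fun j hj => hAk j hj)] at h3
  have hPow : ∀ n j, matPow A n k j = if k = j then 1 else 0 := by
    intro n
    induction n with
    | zero => intro j; rfl
    | succ n ih =>
      intro j
      show (∑' m, A k m * matPow A n m j) = _
      rw [tsum_eq_single k (fun m hm => by rw [hAk m hm, zero_mul]), hAkk, one_mul, ih j]
  obtain ⟨n, hn⟩ := hirr k (k + 1)
  rw [hPow n (k + 1), if_neg (by omega)] at hn
  exact lt_irrefl _ hn

noncomputable def zvec (u : ℕ → ℝ) (k l : ℕ) (M : ℝ) : ℕ → ℂ :=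
  fun i => (M : ℂ) * (if i = k then ((u k)⁻¹ : ℂ) else 0)
    - ((M : ℂ) - 1) * (if i = l then ((u l)⁻¹ : ℂ) else 0)

lemma zvec_spec {q : ℝ} (hq : 1 ≤ q) (u : ℕ → ℝ) {k l : ℕ} (hkl : k ≠ l)
    (hk : 0 < u k) (hl : 0 < u l) {M : ℝ} (hM : 1 ≤ M) :
    memlq q (zvec u k l M) ∧ ((∑' i, (u i : ℂ) * zvec u k l M i) = 1) ∧
    ((∑' i, u i * ‖zvec u k l M i‖) = 2 * M - 1) := by
  have hq0 : q ≠ 0 := by intro h; rw [h] at hq; norm_num at hq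
  have hsupp : ∀ i, i ∉ ({k, l} : Finset ℕ) → zvec u k l M i = 0 := by
    intro i hi
    simp only [Finset.mem_insert, Finset.mem_singleton, not_or] at hi
    simp [zvec, hi.1, hi.2]
  have hzk : zvec u k l M k = (M : ℂ) * (((u k)⁻¹ : ℝ) : ℂ) := by
    simp [zvec, hkl]
  have hzl : zvec u k l M l = -(((M : ℂ) - 1) * (((u l)⁻¹ : ℝ) : ℂ)) := by
    simp [zvec, Ne.symm hkl]
  have huk : ((u k : ℝ) : ℂ) ≠ 0 := Complex.ofReal_ne_zero.mpr hk.ne'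
  have hul : ((u l : ℝ) : ℂ) ≠ 0 := Complex.ofReal_ne_zero.mpr hl.ne'
  refine ⟨?_, ?_, ?_⟩
  · apply summable_of_ne_finset_zero (s := ({k, l} : Finset ℕ))
    intro n hn
    rw [hsupp n hn, norm_zero, Real.zero_rpow hq0]
  · rw [tsum_eq_sum (s := ({k, l} : Finset ℕ))
      (fun i hi => by rw [hsupp i hi, mul_zero]),
      Finset.sum_pair hkl, hzk, hzl]
    field_simp
    rw [Complex.ofReal_div, Complex.ofReal_div, Complex.ofReal_one]; field_simp; ring
  · rw [tsum_eq_sum (s := ({k, l} : Finset ℕ))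
      (fun i hi => by rw [hsupp i hi, norm_zero, mul_zero]),
      Finset.sum_pair hkl, hzk, hzl]
    rw [norm_neg, norm_mul, norm_mul]
    have h1 : ‖(M : ℂ)‖ = M := by
      rw [Complex.norm_real, Real.norm_of_nonneg (by linarith)]
    have h2 : ‖(M : ℂ) - 1‖ = M - 1 := by
      have h : (M : ℂ) - 1 = ((M - 1 : ℝ) : ℂ) := by push_cast; ring
      rw [h, Complex.norm_real, Real.norm_of_nonneg (by linarith)]
    have h3 : ‖(((u k)⁻¹ : ℝ) : ℂ)‖ = (u k)⁻¹ := by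
      rw [Complex.norm_real, Real.norm_of_nonneg (by positivity)]
    have h4 : ‖(((u l)⁻¹ : ℝ) : ℂ)‖ = (u l)⁻¹ := by
      rw [Complex.norm_real, Real.norm_of_nonneg (by positivity)]
    rw [h1, h2, h3, h4]
    field_simp
    ring

set_option maxHeartbeats 1000000 in
/-- Let `q ≥ 1` and let `A` be an irreducible stochastic matrix which is positive
recurrent (has an invariant probability vector `u ∈ l¹`), acting as a bounded linear
operator on `ℓ^q`.  Then `A` is not supercyclic on `ℓ^q`. -/
theorem stmt5 (q : ℝ) (hq : 1 ≤ q) (A : ℕ → ℕ → ℝ)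
    (hpos : ∀ i j, 0 ≤ A i j)
    (hrow : ∀ i, HasSum (fun j => A i j) 1)
    (hirr : ∀ i j, ∃ n, 0 < matPow A n i j)
    (u : ℕ → ℝ) (hu_nn : ∀ i, 0 ≤ u i) (hu_sum : HasSum u 1)
    (hu_inv : ∀ j, HasSum (fun i => u i * A i j) (u j))
    (hmap : ∀ x, memlq q x → memlq q (matAct A x))
    (hbdd : ∃ C : ℝ, ∀ x, memlq q x →
      (∑' n, ‖matAct A x n‖ ^ q) ^ (1/q) ≤ C * (∑' n, ‖x n‖ ^ q) ^ (1/q)) :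
    ¬ SupercyclicOn (memlq q) (distLqlt q) (matAct A) := by
  have hq0 : (0:ℝ) < q := by linarith
  intro hsc
  obtain ⟨x, hx, hdense⟩ := hsc
  obtain ⟨k, l, hkl, hk, hl⟩ := exists_two_pos A hpos hrow hirr u hu_nn hu_sum hu_inv
  have hu : Summable u := hu_sum.summable
  have hiter : ∀ n, memlq q ((matAct A)^[n] x) ∧
      ((∑' i, (u i : ℂ) * (matAct A)^[n] x i) = ∑' i, (u i : ℂ) * x i) ∧
      ((∑' i, u i * ‖(matAct A)^[n] x i‖) ≤ ∑' i, u i * ‖x i‖) := by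
    intro n
    induction n with
    | zero => exact ⟨hx, rfl, le_refl _⟩
    | succ n ih =>
      obtain ⟨ih1, ih2, ih3⟩ := ih
      rw [Function.iterate_succ_apply']
      refine ⟨hmap _ ih1, ?_, ?_⟩
      · rw [phi_invariant A hpos hrow u hu_nn hu_sum hu_inv _ (norm_le_lqnorm hq ih1), ih2]
      · exact le_trans
          (N_decreasing A hpos hrow u hu_nn hu_sum hu_inv _ (norm_le_lqnorm hq ih1)) ih3
  set Nx := ∑' i, u i * ‖x i‖ with hNxdef
  set φx := ∑' i, (u i : ℂ) * x i with hφxdef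
  have hNx0 : 0 ≤ Nx := tsum_nonneg (fun i => mul_nonneg (hu_nn i) (norm_nonneg _))
  set a := ‖φx‖ with hadef
  have ha0 : 0 ≤ a := norm_nonneg _
  set M := 1 + Nx / a with hMdef
  have hM1 : 1 ≤ M := le_add_of_nonneg_right (div_nonneg hNx0 ha0)
  obtain ⟨hzmem, hzφ, hzN⟩ := zvec_spec hq u hkl hk hl hM1
  obtain ⟨lam, n, hd⟩ := hdense (zvec u k l M) hzmem ((1/2 : ℝ) ^ q)
    (Real.rpow_pos_of_pos (by norm_num) q)
  obtain ⟨hxn_mem, hxn_φ, hxn_N⟩ := hiter n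
  set y := (matAct A)^[n] x with hy
  set w := fun i => lam * y i - zvec u k l M i with hw
  clear_value Nx φx a M y w
  have hw_mem : memlq q w := by
    rw [hw]; exact memlq_sub hq (memlq_smul hxn_mem lam) hzmem
  have hd' : (∑' i, ‖w i‖ ^ q) < (1/2 : ℝ) ^ q := by
    simpa only [distLqlt, hw] using hd
  have hNw : (∑' i, u i * ‖w i‖) < 1/2 := by
    have h1 : (∑' i, u i * ‖w i‖) ≤ (∑' i, ‖w i‖ ^ q) ^ (1/q) :=
      N_le_lq hq hu_nn hu_sum hw_mem
    have h2 : (∑' i, ‖w i‖ ^ q) ^ (1/q) < ((1/2 : ℝ) ^ q) ^ (1/q) :=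
      Real.rpow_lt_rpow (tsum_nonneg (fun i => Real.rpow_nonneg (norm_nonneg _) q))
        hd' (by positivity)
    rw [← Real.rpow_mul (by norm_num), mul_one_div_cancel hq0.ne', Real.rpow_one] at h2
    linarith
  have hφw : (∑' i, (u i : ℂ) * w i) = lam * φx - 1 := by
    have hs1 : Summable (fun i => lam * ((u i : ℂ) * y i)) :=
      (sumPhi hq hu_nn hu hxn_mem).mul_left lam
    have hs2 : Summable (fun i => (u i : ℂ) * zvec u k l M i) :=
      sumPhi hq hu_nn hu hzmem
    calc (∑' i, (u i : ℂ) * w i)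
        = ∑' i, (lam * ((u i : ℂ) * y i) - (u i : ℂ) * zvec u k l M i) :=
          tsum_congr (fun i => by simp only [hw]; ring)
      _ = (∑' i, lam * ((u i : ℂ) * y i)) - ∑' i, (u i : ℂ) * zvec u k l M i :=
          Summable.tsum_sub hs1 hs2
      _ = lam * φx - 1 := by rw [tsum_mul_left, hxn_φ, hzφ]
  have hkey : ‖lam * φx - 1‖ < 1/2 := by
    rw [← hφw]
    exact lt_of_le_of_lt (normPhi_le hq hu_nn hu hw_mem) hNw
  have hnm : ‖lam * φx‖ = ‖lam‖ * a := by rw [hadef]; exact norm_mul _ _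
  have htri : (1:ℝ) ≤ ‖lam * φx - 1‖ + ‖lam‖ * a := by
    have h := norm_sub_norm_le (1 : ℂ) (lam * φx)
    rw [norm_one, norm_sub_rev] at h
    linarith [h, hnm.le, hnm.ge]
  have hla : 1/2 < ‖lam‖ * a := by linarith
  have hapos : 0 < a := by
    by_contra h
    push_neg at h
    have h0 : a = 0 := le_antisymm h ha0
    rw [h0, mul_zero] at hla
    linarith
  have hlam32 : ‖lam‖ * a < 3/2 := by
    have h := norm_sub_norm_le (lam * φx) (1 : ℂ)
    rw [norm_one] at h
    linarith
  have hNy : Summable (fun i => u i * ‖y i‖) := sumN hq hu_nn hu hxn_mem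
  have hNw_sum : Summable (fun i => u i * ‖w i‖) := sumN hq hu_nn hu hw_mem
  have hNz_le : (∑' i, u i * ‖zvec u k l M i‖) ≤
      (∑' i, u i * ‖w i‖) + ‖lam‖ * ∑' i, u i * ‖y i‖ := by
    have hterm : ∀ i, u i * ‖zvec u k l M i‖ ≤ u i * ‖w i‖ + ‖lam‖ * (u i * ‖y i‖) := by
      intro i
      have h1 : ‖zvec u k l M i‖ ≤ ‖lam * y i‖ + ‖w i‖ := by
        have hz : zvec u k l M i = lam * y i - w i := by simp only [hw]; ring
        rw [hz]
        exact norm_sub_le _ _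
      have h2 := mul_le_mul_of_nonneg_left h1 (hu_nn i)
      rw [norm_mul] at h2
      have h3 : u i * (‖lam‖ * ‖y i‖ + ‖w i‖) = u i * ‖w i‖ + ‖lam‖ * (u i * ‖y i‖) := by
        ring
      linarith
    calc (∑' i, u i * ‖zvec u k l M i‖)
        ≤ ∑' i, (u i * ‖w i‖ + ‖lam‖ * (u i * ‖y i‖)) :=
          Summable.tsum_le_tsum hterm (sumN hq hu_nn hu hzmem) (hNw_sum.add (hNy.mul_left _))
      _ = _ := by rw [Summable.tsum_add hNw_sum (hNy.mul_left _), tsum_mul_left]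
  rw [hzN] at hNz_le
  have h5 : ‖lam‖ * (∑' i, u i * ‖y i‖) ≤ ‖lam‖ * Nx :=
    mul_le_mul_of_nonneg_left hxn_N (norm_nonneg lam)
  have hfinal : 2 * M - 1 < 1/2 + ‖lam‖ * Nx := by linarith
  have hdiv : Nx / a * a = Nx := div_mul_cancel₀ _ hapos.ne'
  rw [hMdef] at hfinal
  nlinarith [mul_lt_mul_of_pos_right hfinal hapos,
    mul_le_mul_of_nonneg_right hlam32.le hNx0, hdiv, hNx0, hapos]
end

section
/- Let p ∈ (0,1) and let X be c_0 or l^q for some q ≥ 1. The point spectrum of W_p on X is nonempty if and only if p > 1/2; moreover, when p > 1/2, 0 belongs to the point spectrum, i.e. there exists a nonzero u ∈ X with W_p u = 0. -/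
open Filter

/-- The transition operator of the simple random walk on `ℤ₊` with partial reflection
at `0` and jump probability `p`: `(W_p x)_0 = (1-p) x_0 + p x_1` and
`(W_p x)_i = (1-p) x_{i-1} + p x_{i+1}` for `i ≥ 1`. -/
noncomputable def Wop (p : ℝ) (x : ℕ → ℂ) : ℕ → ℂ := fun i =>
  if i = 0 then ((1 - p : ℝ) : ℂ) * x 0 + (p : ℂ) * x 1
  else ((1 - p : ℝ) : ℂ) * x (i - 1) + (p : ℂ) * x (i + 1)

/-- Membership in `c₀`: sequences tending to `0`. -/
def memc0 (x : ℕ → ℂ) : Prop := Filter.Tendsto x Filter.atTop (nhds 0)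

/-- Sup-norm distance between `x` and `z` is (at most) `ε`, coordinatewise strict form. -/
def distC0lt (x z : ℕ → ℂ) (ε : ℝ) : Prop := ∀ i, ‖x i - z i‖ < ε

lemma key (p : ℝ) (hp0 : 0 < p) (lam z₁ z₂ : ℂ) (u : ℕ → ℂ)
    (hsum : (p:ℂ) * (z₁ + z₂) = lam)
    (hprod : (p:ℂ) * (z₁ * z₂) = ((1 - p : ℝ) : ℂ))
    (hz2 : 1 ≤ ‖z₂‖) (hc0 : memc0 u)
    (heig : Wop p u = fun i => lam * u i) : u = 0 := by
  have hpc : (p:ℂ) ≠ 0 := by exact_mod_cast hp0.ne'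
  have hrec : ∀ n : ℕ, u (n+2) = (z₁ + z₂) * u (n+1) - (z₁ * z₂) * u n := by
    intro n
    have h := congrFun heig (n+1)
    simp only [Wop, Nat.succ_ne_zero, if_false, Nat.add_sub_cancel] at h
    have h2 : (p:ℂ) * u (n+2) = (p:ℂ) * ((z₁+z₂) * u (n+1) - (z₁*z₂) * u n) := by
      linear_combination h + u n * hprod - u (n+1) * hsum
    exact mul_left_cancel₀ hpc h2
  have hbd : ((1-p:ℝ):ℂ) * u 0 + (p:ℂ) * u 1 = lam * u 0 := by
    have h := congrFun heig 0
    simpa [Wop] using h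
  set w : ℕ → ℂ := fun n => u (n+1) - z₁ * u n with hw
  have hwstep : ∀ n, w (n+1) = z₂ * w n := by
    intro n
    simp only [hw]
    rw [hrec n]; ring
  have hwpow : ∀ n, w n = z₂ ^ n * w 0 := by
    intro n
    induction n with
    | zero => simp
    | succ k ih => rw [hwstep, ih, pow_succ]; ring
  have hwt : Tendsto w atTop (nhds 0) := by
    have h1 : Tendsto (fun n => u (n+1)) atTop (nhds 0) :=
      hc0.comp (tendsto_add_atTop_nat 1)
    have h2 : Tendsto (fun n => z₁ * u n) atTop (nhds 0) := by
      simpa using hc0.const_mul z₁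
    simpa [hw] using h1.sub h2
  have hw0 : w 0 = 0 := by
    by_contra h
    have hlb : ∀ n, ‖w 0‖ ≤ ‖w n‖ := by
      intro n
      rw [hwpow n, norm_mul, norm_pow]
      nlinarith [one_le_pow₀ hz2 (n := n), norm_nonneg (w 0)]
    have hwn : Tendsto (fun n => ‖w n‖) atTop (nhds 0) := by simpa using hwt.norm
    have h0 : ‖w 0‖ ≤ 0 := ge_of_tendsto' hwn hlb
    exact h (norm_le_zero_iff.mp h0)
  have hgeo : ∀ n, u n = z₁ ^ n * u 0 := by
    intro n
    induction n with
    | zero => simp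
    | succ k ih =>
      have hwk : w k = 0 := by rw [hwpow, hw0, mul_zero]
      simp only [hw] at hwk
      have h1 : u (k+1) = z₁ * u k := by linear_combination hwk
      rw [h1, ih, pow_succ]; ring
  have hz2ne : z₂ ≠ 0 := by
    intro h; rw [h] at hz2; simp at hz2; linarith
  have hu0 : u 0 = 0 := by
    rcases eq_or_ne z₁ 1 with h1 | h1
    · have hconst : Tendsto (fun _ : ℕ => u 0) atTop (nhds 0) := by
        refine hc0.congr fun n => ?_
        rw [hgeo n, h1, one_pow, one_mul]
      exact (tendsto_nhds_unique hconst tendsto_const_nhds).symm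
    · have hb2 : (p:ℂ) * z₂ * (z₁ - 1) * u 0 = 0 := by
        have hu1 : u 1 = z₁ * u 0 := by rw [hgeo 1]; ring
        linear_combination hbd + u 0 * hprod - u 0 * hsum - (p:ℂ) * hu1
      have := mul_eq_zero.mp hb2
      rcases this with h | h
      · exfalso
        rcases mul_eq_zero.mp h with h | h
        · rcases mul_eq_zero.mp h with h | h
          · exact hpc h
          · exact hz2ne h
        · exact h1 (by linear_combination h)
      · exact h
  funext n
  rw [hgeo n, hu0, mul_zero]; rfl

lemma no_eig (p : ℝ) (hp0 : 0 < p) (hple : p ≤ 1/2) (lam : ℂ) (u : ℕ → ℂ)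
    (hc0 : memc0 u) (heig : Wop p u = fun i => lam * u i) : u = 0 := by
  have hpc : (p:ℂ) ≠ 0 := by exact_mod_cast hp0.ne'
  obtain ⟨d, hd⟩ : ∃ d : ℂ, d ^ 2 = lam ^ 2 - 4 * p * (1 - (p:ℂ)) :=
    IsAlgClosed.exists_pow_nat_eq _ (by norm_num : (0:ℕ) < 2)
  set z₁ := (lam + d) / (2 * p) with hz₁
  set z₂ := (lam - d) / (2 * p) with hz₂
  have hsum : (p:ℂ) * (z₁ + z₂) = lam := by
    rw [hz₁, hz₂]; field_simp; ring
  have hprod : (p:ℂ) * (z₁ * z₂) = ((1-p:ℝ):ℂ) := by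
    rw [hz₁, hz₂]
    push_cast
    field_simp
    linear_combination (-1:ℂ) * hd
  have hpn : 1 ≤ ‖z₁‖ * ‖z₂‖ := by
    have hval : z₁ * z₂ = (((1-p)/p : ℝ) : ℂ) := by
      have : (p:ℂ) * (z₁ * z₂) = (p:ℂ) * (((1-p)/p : ℝ) : ℂ) := by
        rw [hprod]; push_cast; field_simp
      exact mul_left_cancel₀ hpc this
    rw [← norm_mul, hval, Complex.norm_real, Real.norm_eq_abs,
      abs_of_nonneg (div_nonneg (by linarith) hp0.le)]
    rw [le_div_iff₀ hp0]; linarith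
  rcases le_total ‖z₁‖ ‖z₂‖ with hle | hle
  · have h1 : 1 ≤ ‖z₂‖ := by nlinarith [norm_nonneg z₁, norm_nonneg z₂]
    exact key p hp0 lam z₁ z₂ u hsum hprod h1 hc0 heig
  · have h1 : 1 ≤ ‖z₁‖ := by nlinarith [norm_nonneg z₁, norm_nonneg z₂]
    exact key p hp0 lam z₂ z₁ u (by rw [add_comm]; exact hsum)
      (by rw [mul_comm z₂ z₁]; exact hprod) h1 hc0 heig

lemma lq_to_c0 {q : ℝ} (hq : 1 ≤ q) {u : ℕ → ℂ} (h : memlq q u) : memc0 u := by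
  have hq0 : q ≠ 0 := by linarith
  have h1 : Tendsto (fun n => ‖u n‖ ^ q) atTop (nhds 0) := h.tendsto_atTop_zero
  have h2 : Tendsto (fun n => (‖u n‖ ^ q) ^ q⁻¹) atTop (nhds 0) := by
    have := h1.rpow_const (p := q⁻¹) (Or.inr (by positivity))
    simpa [Real.zero_rpow (inv_ne_zero hq0)] using this
  have h3 : Tendsto (fun n => ‖u n‖) atTop (nhds 0) := by
    refine h2.congr fun n => ?_
    exact Real.rpow_rpow_inv (norm_nonneg _) hq0
  exact tendsto_zero_iff_norm_tendsto_zero.mpr h3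

lemma eig_construct (p : ℝ) (hp : 1/2 < p) (hp1 : p < 1) :
    ∃ u : ℕ → ℂ, u ≠ 0 ∧ memc0 u ∧ (∀ q : ℝ, 1 ≤ q → memlq q u) ∧ Wop p u = 0 := by
  have hp0 : 0 < p := by linarith
  have hpc : (p:ℂ) ≠ 0 := by exact_mod_cast hp0.ne'
  set r : ℝ := (1-p)/p with hr
  have hr0 : 0 ≤ r := div_nonneg (by linarith) hp0.le
  have hr1 : r < 1 := by rw [hr, div_lt_one hp0]; linarith
  set c : ℂ := ((-r : ℝ) : ℂ) with hc
  have hnc : ‖c‖ = r := by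
    rw [hc, Complex.norm_real, Real.norm_eq_abs, abs_neg, abs_of_nonneg hr0]
  have key0 : ((1-p:ℝ):ℂ) + (p:ℂ) * c = 0 := by
    rw [hc, hr]; push_cast; field_simp; ring
  refine ⟨fun n => c ^ ((n+1)/2), ?_, ?_, ?_, ?_⟩
  · intro h
    have := congrFun h 0
    norm_num at this
  · have hm : Tendsto (fun n : ℕ => (n+1)/2) atTop atTop :=
      tendsto_atTop_atTop.mpr fun b => ⟨2*b, fun n hn => by omega⟩
    have hpow : Tendsto (fun k : ℕ => c ^ k) atTop (nhds 0) :=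
      tendsto_pow_atTop_nhds_zero_of_norm_lt_one (by rw [hnc]; exact hr1)
    exact hpow.comp hm
  · intro q hq
    set s := Real.sqrt r with hs
    have hs0 : 0 ≤ s := Real.sqrt_nonneg r
    have hs1 : s < 1 := by
      rw [hs, show (1:ℝ) = Real.sqrt 1 by simp]
      exact Real.sqrt_lt_sqrt hr0 hr1
    have ht1 : s ^ q < 1 := Real.rpow_lt_one hs0 hs1 (by linarith)
    have ht0 : 0 ≤ s ^ q := Real.rpow_nonneg hs0 q
    refine Summable.of_nonneg_of_le (fun n => Real.rpow_nonneg (norm_nonneg _) q)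
      (fun n => ?_) (summable_geometric_of_lt_one ht0 ht1)
    have hnu : ‖c ^ ((n+1)/2)‖ = r ^ ((n+1)/2) := by rw [norm_pow, hnc]
    have hle : ‖c ^ ((n+1)/2)‖ ≤ s ^ n := by
      rw [hnu, ← Real.sq_sqrt hr0, ← hs, ← pow_mul]
      exact pow_le_pow_of_le_one hs0 hs1.le (by omega)
    calc ‖c ^ ((n+1)/2)‖ ^ q ≤ (s ^ n) ^ q :=
          Real.rpow_le_rpow (norm_nonneg _) hle (by linarith)
      _ = (s ^ q) ^ n := by
          rw [← Real.rpow_natCast s n, ← Real.rpow_natCast (s ^ q) n,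
            ← Real.rpow_mul hs0, ← Real.rpow_mul hs0, mul_comm]
  · funext i
    match i with
    | 0 =>
      show ((1-p:ℝ):ℂ) * c ^ ((0+1)/2) + (p:ℂ) * c ^ ((1+1)/2) = 0
      have e0 : ((0:ℕ)+1)/2 = 0 := by norm_num
      have e1 : ((1:ℕ)+1)/2 = 1 := by norm_num
      rw [e0, e1, pow_zero, pow_one, mul_one]
      linear_combination key0
    | Nat.succ k =>
      show ((1-p:ℝ):ℂ) * c ^ ((k+1)/2) + (p:ℂ) * c ^ ((k+1+1+1)/2) = 0
      have hidx : (k+1+1+1)/2 = (k+1)/2 + 1 := by omega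
      rw [hidx, pow_succ]
      linear_combination c ^ ((k+1)/2) * key0

/-- For `p ∈ (0,1)`, the point spectrum of `W_p` on `c₀` (resp. on `ℓ^q`, `q ≥ 1`)
is nonempty if and only if `p > 1/2`; moreover when `p > 1/2`, `0` is an eigenvalue,
i.e. there is a nonzero `u` in the space with `W_p u = 0`. -/
theorem stmt9 (p : ℝ) (hp0 : 0 < p) (hp1 : p < 1) :
    ((∃ (lam : ℂ) (u : ℕ → ℂ), u ≠ 0 ∧ memc0 u ∧ Wop p u = fun i => lam * u i) ↔
      1/2 < p) ∧
    (∀ q : ℝ, 1 ≤ q →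
      ((∃ (lam : ℂ) (u : ℕ → ℂ), u ≠ 0 ∧ memlq q u ∧ Wop p u = fun i => lam * u i) ↔
        1/2 < p)) ∧
    (1/2 < p →
      (∃ u : ℕ → ℂ, u ≠ 0 ∧ memc0 u ∧ Wop p u = 0) ∧
      ∀ q : ℝ, 1 ≤ q → ∃ u : ℕ → ℂ, u ≠ 0 ∧ memlq q u ∧ Wop p u = 0) := by
  refine ⟨⟨?_, ?_⟩, fun q hq => ⟨?_, ?_⟩, fun hp => ?_⟩
  · rintro ⟨lam, u, hne, hc0, heig⟩
    by_contra h
    push_neg at h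
    exact hne (no_eig p hp0 h lam u hc0 heig)
  · intro hp
    obtain ⟨u, hne, hc0, _, hW⟩ := eig_construct p hp hp1
    exact ⟨0, u, hne, hc0, by rw [hW]; funext i; simp⟩
  · rintro ⟨lam, u, hne, hlq, heig⟩
    by_contra h
    push_neg at h
    exact hne (no_eig p hp0 h lam u (lq_to_c0 hq hlq) heig)
  · intro hp
    obtain ⟨u, hne, _, hlq, hW⟩ := eig_construct p hp hp1
    exact ⟨0, u, hne, hlq q hq, by rw [hW]; funext i; simp⟩
  · obtain ⟨u, hne, hc0, hlq, hW⟩ := eig_construct p hp hp1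
    exact ⟨⟨u, hne, hc0, hW⟩, fun q hq => ⟨u, hne, hlq q hq, hW⟩⟩
end

section
/- For p = 1/2, every real number λ with −1 < λ < 1 is an eigenvalue of W_{1/2} acting on l^∞: there exists a nonzero bounded complex sequence u with W_{1/2} u = λ u. Hence the open interval (−1,1) is contained in the point spectrum of W_{1/2} on l^∞. -/
open Filter

lemma ccos_key (a b : ℂ) :
    (1/2) * Complex.cos (a - b) + (1/2) * Complex.cos (a + b)
      = Complex.cos b * Complex.cos a := by
  rw [Complex.cos_add, Complex.cos_sub]; ring

/-- For `p = 1/2`, every real `λ ∈ (-1,1)` is an eigenvalue of `W_{1/2}` acting on `l^∞`: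
there is a nonzero bounded complex sequence `u` with `W_{1/2} u = λ u`.  Hence `(-1,1)`
is contained in the point spectrum of `W_{1/2}` on `l^∞`. -/
theorem stmt10 (lam : ℝ) (h1 : -1 < lam) (h2 : lam < 1) :
    ∃ u : ℕ → ℂ, u ≠ 0 ∧ (∃ C : ℝ, ∀ n, ‖u n‖ ≤ C) ∧
      Wop (1/2) u = fun i => (lam : ℂ) * u i := by
  set θ := Real.arccos lam with hθ
  have hθ0 : 0 < θ := Real.arccos_pos.2 h2
  have hθπ : θ < Real.pi := by
    have := Real.arccos_le_pi lam
    rcases lt_or_eq_of_le this with h | h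
    · exact h
    · exfalso
      have hc : Real.cos θ = lam := Real.cos_arccos h1.le h2.le
      rw [hθ.trans h, Real.cos_pi] at hc
      linarith
  have hlam : Real.cos θ = lam := Real.cos_arccos h1.le h2.le
  have hlamC : (lam : ℂ) = Complex.cos (θ : ℂ) := by
    rw [← hlam, Complex.ofReal_cos]
  refine ⟨fun n => ((Real.cos ((n + 1/2) * θ) : ℝ) : ℂ), ?_, ⟨1, fun n => ?_⟩, ?_⟩
  · intro h
    have h0 := congrFun h 0
    simp only [Pi.zero_apply] at h0
    have hr : Real.cos (((0:ℕ) + 1/2) * θ) = 0 := Complex.ofReal_eq_zero.mp h0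
    have hpos : 0 < Real.cos (((0:ℕ) + 1/2) * θ) := by
      apply Real.cos_pos_of_mem_Ioo
      constructor
      · push_cast; nlinarith [Real.pi_pos]
      · push_cast; nlinarith
    linarith
  · rw [Complex.norm_real]
    exact Real.abs_cos_le_one _
  · funext i
    rcases i with _ | k
    · simp only [Wop, if_pos rfl]
      push_cast
      rw [show ((1:ℂ) - 1/2) = 1/2 by norm_num, hlamC]
      have h := ccos_key (θ : ℂ) ((θ : ℂ)/2)
      have e1 : ((θ:ℂ)) - (θ:ℂ)/2 = (0 + 1/2) * (θ:ℂ) := by ring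
      have e2 : ((θ:ℂ)) + (θ:ℂ)/2 = (1 + 1/2) * (θ:ℂ) := by ring
      rw [e1, e2] at h
      have e3 : Complex.cos ((θ:ℂ)/2) = Complex.cos ((0 + 1/2) * (θ:ℂ)) := by
        congr 1; ring
      rw [h, e3]; ring
    · simp only [Wop, Nat.succ_ne_zero, if_neg, Nat.add_sub_cancel]
      push_cast
      rw [show ((1:ℂ) - 1/2) = 1/2 by norm_num, hlamC]
      have h := ccos_key (((k:ℂ) + 1 + 1/2) * (θ:ℂ)) (θ : ℂ)
      have e1 : ((k:ℂ) + 1 + 1/2) * (θ:ℂ) - (θ:ℂ) = ((k:ℂ) + 1/2) * (θ:ℂ) := by ring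
      have e2 : ((k:ℂ) + 1 + 1/2) * (θ:ℂ) + (θ:ℂ) = ((k:ℂ) + 1 + 1 + 1/2) * (θ:ℂ) := by ring
      rw [e1, e2] at h
      convert h using 2
end

section
/- Let p ∈ (1/2, 1) and let X be c_0 or l^q for some q ≥ 1. Then for every v = (v_i)_{i≥0} ∈ X there exists u = (u_i)_{i≥0} ∈ X with W_p u = v. Moreover, the solution u with u_0 = 0, given explicitly by u_n = (1/p) Σ_{j=0}^{⌊(n-1)/2⌋} ((p−1)/p)^j v_{n−2j−1} for n ≥ 1, satisfies ‖u‖ ≤ ‖v‖/(2p−1), where ‖·‖ denotes the norm of X. -/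
open Filter

/-- The explicit right inverse of `W_p` with `u_0 = 0`:
`u_n = (1/p) ∑_{j=0}^{⌊(n-1)/2⌋} ((p-1)/p)^j v_{n-2j-1}` for `n ≥ 1`
(note `⌊(n-1)/2⌋ + 1 = ⌊(n+1)/2⌋` terms). -/
noncomputable def Sinv (p : ℝ) (v : ℕ → ℂ) : ℕ → ℂ := fun n =>
  if n = 0 then 0 else
    (1 / (p : ℂ)) * ∑ j ∈ Finset.range ((n + 1) / 2),
      (((p - 1) / p : ℝ) : ℂ) ^ j * v (n - 2*j - 1)

lemma sinv_apply (p : ℝ) (v : ℕ → ℂ) (n : ℕ) :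
    Sinv p v n = (1 / (p : ℂ)) * ∑ j ∈ Finset.range ((n + 1) / 2),
      (((p - 1) / p : ℝ) : ℂ) ^ j * v (n - 2*j - 1) := by
  unfold Sinv
  rcases Nat.eq_zero_or_pos n with h | h
  · simp [h]
  · rw [if_neg h.ne']

lemma wop_sinv (p : ℝ) (hp : p ≠ 0) (v : ℕ → ℂ) : Wop p (Sinv p v) = v := by
  have hP : (p : ℂ) ≠ 0 := by exact_mod_cast hp
  funext i
  unfold Wop
  rcases i with _ | m
  · rw [if_pos rfl]
    rw [sinv_apply, sinv_apply]
    norm_num [Finset.sum_range_one]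
    field_simp
  · rw [if_neg (Nat.succ_ne_zero m)]
    have e1 : m + 1 - 1 = m := rfl
    rw [e1, sinv_apply, sinv_apply]
    have e2 : (m + 1 + 1 + 1) / 2 = (m + 1) / 2 + 1 := by omega
    rw [e2, Finset.sum_range_succ']
    have e3 : ∀ j ∈ Finset.range ((m + 1) / 2),
        (((p - 1) / p : ℝ) : ℂ) ^ (j + 1) * v (m + 1 + 1 - 2*(j+1) - 1)
          = (((p - 1) / p : ℝ) : ℂ) * ((((p - 1) / p : ℝ) : ℂ) ^ j * v (m - 2*j - 1)) := by
      intro j _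
      rw [show m + 1 + 1 - 2*(j+1) - 1 = m - 2*j - 1 by omega, pow_succ]
      ring
    rw [Finset.sum_congr rfl e3, ← Finset.mul_sum]
    have e4 : m + 1 + 1 - 2*0 - 1 = m + 1 := by omega
    rw [e4]
    set S := ∑ j ∈ Finset.range ((m + 1) / 2),
      (((p - 1) / p : ℝ) : ℂ) ^ j * v (m - 2*j - 1) with hS
    push_cast
    field_simp
    ring

lemma normR (p : ℝ) (hp0 : 0 < p) (hp1 : p < 1) :
    ‖(((p - 1) / p : ℝ) : ℂ)‖ = (1 - p) / p := by
  rw [Complex.norm_real, Real.norm_eq_abs, abs_div, abs_of_neg (by linarith : p - 1 < 0),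
    abs_of_pos hp0]
  ring

lemma harith (p : ℝ) (hp : 1/2 < p) (hp1 : p < 1) (M : ℝ) :
    (1/p) * ((1 - (1 - p)/p)⁻¹ * M) = M / (2*p - 1) := by
  have hp0 : (0:ℝ) < p := by linarith
  have h2 : (2*p - 1) ≠ 0 := ne_of_gt (by linarith)
  rw [show 1 - (1 - p)/p = (2*p - 1)/p by field_simp; ring, inv_div]
  field_simp
  try ring

lemma bound_pointwise (p : ℝ) (hp : 1/2 < p) (hp1 : p < 1) (v : ℕ → ℂ) (M : ℝ)
    (hM : ∀ i, ‖v i‖ ≤ M) (n : ℕ) : ‖Sinv p v n‖ ≤ M / (2*p - 1) := by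
  have hp0 : (0:ℝ) < p := by linarith
  have hr0 : (0:ℝ) ≤ (1 - p)/p := div_nonneg (by linarith) hp0.le
  have hr1 : (1 - p)/p < 1 := (div_lt_one hp0).2 (by linarith)
  have hM0 : (0:ℝ) ≤ M := le_trans (norm_nonneg _) (hM 0)
  rw [sinv_apply, norm_mul]
  have h1 : ‖(1/(p:ℂ))‖ = 1/p := by
    rw [norm_div, norm_one, Complex.norm_real, Real.norm_eq_abs, abs_of_pos hp0]
  rw [h1]
  have hsum : ‖∑ j ∈ Finset.range ((n + 1) / 2),
      (((p - 1) / p : ℝ) : ℂ) ^ j * v (n - 2*j - 1)‖ ≤ (1 - (1 - p)/p)⁻¹ * M := by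
    calc ‖∑ j ∈ Finset.range ((n + 1) / 2), (((p - 1) / p : ℝ) : ℂ) ^ j * v (n - 2*j - 1)‖
        ≤ ∑ j ∈ Finset.range ((n + 1) / 2), ‖(((p - 1) / p : ℝ) : ℂ) ^ j * v (n - 2*j - 1)‖ :=
          norm_sum_le _ _
      _ ≤ ∑ j ∈ Finset.range ((n + 1) / 2), ((1 - p)/p) ^ j * M := by
          refine Finset.sum_le_sum fun j _ => ?_
          rw [norm_mul, norm_pow, normR p hp0 hp1]
          exact mul_le_mul_of_nonneg_left (hM _) (pow_nonneg hr0 _)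
      _ ≤ ∑' j : ℕ, ((1 - p)/p) ^ j * M := by
          refine Summable.sum_le_tsum _ (fun j _ => by positivity) ?_
          exact (summable_geometric_of_lt_one hr0 hr1).mul_right M
      _ = (1 - (1 - p)/p)⁻¹ * M := by
          rw [tsum_mul_right, tsum_geometric_of_lt_one hr0 hr1]
  calc (1/p) * ‖∑ j ∈ Finset.range ((n + 1) / 2),
        (((p - 1) / p : ℝ) : ℂ) ^ j * v (n - 2*j - 1)‖
      ≤ (1/p) * ((1 - (1 - p)/p)⁻¹ * M) :=
        mul_le_mul_of_nonneg_left hsum (by positivity)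
    _ = M / (2*p - 1) := harith p hp hp1 M

lemma sinv_memc0 (p : ℝ) (hp : 1/2 < p) (hp1 : p < 1) (v : ℕ → ℂ) (hv : memc0 v) :
    memc0 (Sinv p v) := by
  have hp0 : (0:ℝ) < p := by linarith
  have hr0 : (0:ℝ) ≤ (1 - p)/p := div_nonneg (by linarith) hp0.le
  have hr1 : (1 - p)/p < 1 := (div_lt_one hp0).2 (by linarith)
  have hbdd : BddAbove (Set.range fun n => ‖v n‖) := (hv.norm.bddAbove_range)
  set M := ⨆ n, ‖v n‖ with hMdef
  have hM : ∀ i, ‖v i‖ ≤ M := fun i => le_ciSup hbdd i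
  have hM0 : (0:ℝ) ≤ M := le_trans (norm_nonneg _) (hM 0)
  set g : ℕ → ℕ → ℂ := fun n j =>
    (((p - 1) / p : ℝ) : ℂ) ^ j * (if 2*j + 1 ≤ n then v (n - 2*j - 1) else 0) with hg
  have key : ∀ n, Sinv p v n = (1/(p:ℂ)) * ∑' j, g n j := by
    intro n
    rw [sinv_apply]
    congr 1
    refine ((tsum_eq_sum (s := Finset.range ((n+1)/2)) ?_).trans
      (Finset.sum_congr rfl ?_)).symm
    · intro j hj
      have : ¬ (2*j + 1 ≤ n) := by
        simp only [Finset.mem_range] at hj; omega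
      simp only [hg, if_neg this, mul_zero]
    · intro j hj
      have : 2*j + 1 ≤ n := by
        simp only [Finset.mem_range] at hj; omega
      simp only [hg, if_pos this]
  have hbsum : Summable (fun j : ℕ => ((1 - p)/p) ^ j * M) :=
    (summable_geometric_of_lt_one hr0 hr1).mul_right M
  have htend : ∀ j, Tendsto (fun n => g n j) atTop (nhds 0) := by
    intro j
    have h1 : Tendsto (fun n => v (n - 2*j - 1)) atTop (nhds 0) := by
      have : Tendsto (fun n : ℕ => n - 2*j - 1) atTop atTop := by
        simpa [Nat.sub_sub] using Filter.tendsto_sub_atTop_nat (2*j + 1)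
      exact hv.comp this
    have h2 : Tendsto (fun n => (((p - 1) / p : ℝ) : ℂ) ^ j * v (n - 2*j - 1)) atTop
        (nhds 0) := by
      simpa using h1.const_mul ((((p - 1) / p : ℝ) : ℂ) ^ j)
    refine h2.congr' ?_
    filter_upwards [eventually_ge_atTop (2*j + 1)] with n hn
    simp only [hg, if_pos hn]
  have hdom : ∀ᶠ n in atTop, ∀ j, ‖g n j‖ ≤ ((1 - p)/p) ^ j * M := by
    refine Eventually.of_forall fun n j => ?_
    rw [hg]
    simp only [norm_mul, norm_pow, normR p hp0 hp1]
    refine mul_le_mul_of_nonneg_left ?_ (pow_nonneg hr0 _)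
    split
    · exact hM _
    · simpa using hM0
  have := tendsto_tsum_of_dominated_convergence hbsum htend hdom
  simp only [tsum_zero] at this
  have h3 := this.const_mul (1/(p:ℂ))
  rw [mul_zero] at h3
  exact h3.congr fun n => (key n).symm

lemma lq_main (p : ℝ) (hp : 1/2 < p) (hp1 : p < 1) (q : ℝ) (hq : 1 ≤ q) (v : ℕ → ℂ)
    (hv : Summable fun n => ‖v n‖ ^ q) :
    (Summable fun n => ‖Sinv p v n‖ ^ q) ∧
    (∑' n, ‖Sinv p v n‖ ^ q) ^ (1/q) ≤ (∑' n, ‖v n‖ ^ q) ^ (1/q) / (2*p - 1) := by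
  have hp0 : (0:ℝ) < p := by linarith
  have hP : (p : ℂ) ≠ 0 := by exact_mod_cast hp0.ne'
  have hq0 : (0:ℝ) < q := by linarith
  have hr0 : (0:ℝ) ≤ (1 - p)/p := div_nonneg (by linarith) hp0.le
  have hr1 : (1 - p)/p < 1 := (div_lt_one hp0).2 (by linarith)
  set Q : ENNReal := ENNReal.ofReal q with hQdef
  have hQt : Q.toReal = q := ENNReal.toReal_ofReal hq0.le
  have hQpos : 0 < Q.toReal := by rw [hQt]; exact hq0
  haveI : Fact (1 ≤ Q) := ⟨ENNReal.one_le_ofReal.2 hq⟩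
  have hQne : Q ≠ 0 := (lt_of_lt_of_le one_pos Fact.out).ne'
  set T : ℝ := (∑' n, ‖v n‖ ^ q) ^ (1/q) with hT
  -- shifts
  set sh : ℕ → ℕ → ℂ := fun k n => if k ≤ n then v (n - k) else 0 with hsh
  have hcomp : ∀ k : ℕ, (fun n => ‖sh k (n + k)‖ ^ q) = fun n => ‖v n‖ ^ q := by
    intro k; funext n
    simp [hsh, Nat.le_add_left, Nat.add_sub_cancel]
  have hzero : ∀ k : ℕ, ∀ n ∉ Set.range (fun m : ℕ => m + k), ‖sh k n‖ ^ q = 0 := by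
    intro k n hn
    have hkn : ¬ k ≤ n := fun h => hn ⟨n - k, by simp [Nat.sub_add_cancel h]⟩
    simp [hsh, hkn, Real.zero_rpow hq0.ne']
  have hinj : ∀ k : ℕ, Function.Injective (fun m : ℕ => m + k) := fun k => add_left_injective k
  have hsum_sh : ∀ k, Summable fun n => ‖sh k n‖ ^ q := by
    intro k
    have h' : Summable fun n => ‖sh k (n + k)‖ ^ q := by rw [hcomp k]; exact hv
    exact (Function.Injective.summable_iff (hinj k) (hzero k)).1 h'
  have htsum_sh : ∀ k, (∑' n, ‖sh k n‖ ^ q) = ∑' n, ‖v n‖ ^ q := by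
    intro k
    have hsupp : Function.support (fun n => ‖sh k n‖ ^ q) ⊆
        Set.range (fun m : ℕ => m + k) := by
      intro n hn
      by_contra h
      exact hn (hzero k n h)
    have := Function.Injective.tsum_eq (hinj k) hsupp
    rw [← this]
    exact congrArg tsum (hcomp k) |>.symm ▸ rfl
  have memv : Memℓp v Q := (memℓp_gen_iff hQpos).2 (by rw [hQt]; exact hv)
  have memsh : ∀ k, Memℓp (sh k) Q := fun k =>
    (memℓp_gen_iff hQpos).2 (by rw [hQt]; exact hsum_sh k)
  set R : ℂ := (((p - 1) / p : ℝ) : ℂ) with hR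
  set c : ℕ → ℂ := fun j => (1/(p:ℂ)) * R ^ j with hc
  set F : ℕ → lp (fun _ : ℕ => ℂ) Q := fun j =>
    c j • (⟨sh (2*j + 1), memsh _⟩ : lp (fun _ : ℕ => ℂ) Q) with hF
  have hshnorm : ∀ k, ‖(⟨sh k, memsh k⟩ : lp (fun _ : ℕ => ℂ) Q)‖ = T := by
    intro k
    rw [lp.norm_eq_tsum_rpow hQpos, hQt, hT]
    congr 1
    exact htsum_sh k
  have hcnorm : ∀ j, ‖c j‖ = (1/p) * ((1 - p)/p) ^ j := by
    intro j
    rw [hc]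
    simp only [norm_mul, norm_pow, norm_div, norm_one]
    rw [hR, normR p hp0 hp1, Complex.norm_real, Real.norm_eq_abs, abs_of_pos hp0]
  have hFnorm : ∀ j, ‖F j‖ = (1/p) * ((1 - p)/p) ^ j * T := by
    intro j
    rw [hF]
    simp only [norm_smul, hshnorm, hcnorm]
  have hT0 : 0 ≤ T := Real.rpow_nonneg (tsum_nonneg fun n => by positivity) _
  have hnormsum : Summable fun j => ‖F j‖ := by
    have : Summable fun j : ℕ => (1/p) * ((1 - p)/p) ^ j * T := by
      have := ((summable_geometric_of_lt_one hr0 hr1).mul_left (1/p)).mul_right T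
      simpa [mul_assoc] using this
    exact this.congr fun j => (hFnorm j).symm
  have hFsum : Summable F := Summable.of_norm hnormsum
  set U : lp (fun _ : ℕ => ℂ) Q := ∑' j, F j with hU
  have hHas : HasSum F U := hFsum.hasSum
  have hUnorm : ‖U‖ ≤ T / (2*p - 1) := by
    calc ‖U‖ ≤ ∑' j, ‖F j‖ := norm_tsum_le_tsum_norm hnormsum
      _ = ∑' j : ℕ, (1/p * T) * ((1 - p)/p) ^ j := by
          refine tsum_congr fun j => ?_
          rw [hFnorm]; ring
      _ = (1/p * T) * (1 - (1 - p)/p)⁻¹ := by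
          rw [tsum_mul_left, tsum_geometric_of_lt_one hr0 hr1]
      _ = T / (2*p - 1) := by
          rw [← harith p hp hp1 T]; ring
  -- coordinate evaluation
  have hev : ∀ n : ℕ, Continuous fun f : lp (fun _ : ℕ => ℂ) Q => (f : ℕ → ℂ) n := by
    intro n
    refine (LipschitzWith.of_dist_le_mul (K := 1) fun f g => ?_).continuous
    rw [dist_eq_norm, dist_eq_norm, NNReal.coe_one, one_mul]
    have h := lp.norm_apply_le_norm hQne (f - g) n
    rwa [lp.coeFn_sub, Pi.sub_apply] at h
  have hcoord : ∀ n, HasSum (fun j => (F j : ℕ → ℂ) n) ((U : ℕ → ℂ) n) := by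
    intro n
    exact hHas.map
      ({ toFun := fun f => (f : ℕ → ℂ) n
         map_zero' := by simp
         map_add' := fun f g => by simp } : lp (fun _ : ℕ => ℂ) Q →+ ℂ) (hev n)
  have hFapp : ∀ j n, (F j : ℕ → ℂ) n
      = c j * (if 2*j + 1 ≤ n then v (n - (2*j + 1)) else 0) := by
    intro j n
    rw [hF]
    simp only [lp.coeFn_smul, Pi.smul_apply, smul_eq_mul]
    try rfl
  have hUeq : ∀ n, (U : ℕ → ℂ) n = Sinv p v n := by
    intro n
    refine (hcoord n).unique ?_
    have h0 : ∀ j ∉ Finset.range ((n + 1)/2), (F j : ℕ → ℂ) n = 0 := by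
      intro j hj
      rw [hFapp, if_neg (by simp only [Finset.mem_range] at hj; omega), mul_zero]
    have h1 : HasSum (fun j => (F j : ℕ → ℂ) n) (∑ j ∈ Finset.range ((n + 1)/2), (F j : ℕ → ℂ) n) :=
      hasSum_sum_of_ne_finset_zero h0
    convert h1 using 1
    rw [sinv_apply, Finset.mul_sum]
    refine Finset.sum_congr rfl fun j hj => ?_
    rw [hFapp, if_pos (by simp only [Finset.mem_range] at hj; omega)]
    rw [show n - (2*j + 1) = n - 2*j - 1 by omega, hc]
    ring
  have hsummU : Summable fun n => ‖Sinv p v n‖ ^ q := by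
    have := (memℓp_gen_iff hQpos).1 (lp.memℓp U)
    rw [hQt] at this
    exact this.congr fun n => by rw [hUeq]
  refine ⟨hsummU, ?_⟩
  have : (∑' n, ‖Sinv p v n‖ ^ q) ^ (1/q) = ‖U‖ := by
    rw [lp.norm_eq_tsum_rpow hQpos, hQt]
    congr 1
    exact tsum_congr fun n => by rw [hUeq]
  rw [this]
  exact hUnorm

/-- For `p ∈ (1/2, 1)` and `X = c₀` or `X = ℓ^q` (`q ≥ 1`): every `v ∈ X` has a
preimage `u ∈ X` under `W_p`; moreover the explicit solution with `u_0 = 0` given by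
`u_n = (1/p) ∑_{j=0}^{⌊(n-1)/2⌋} ((p-1)/p)^j v_{n-2j-1}` lies in `X`, satisfies
`W_p u = v`, and `‖u‖ ≤ ‖v‖ / (2p - 1)` in the norm of `X`. -/
theorem stmt12 (p : ℝ) (hp : 1/2 < p) (hp1 : p < 1) :
    (∀ v, memc0 v →
      (∃ u, memc0 u ∧ Wop p u = v) ∧
      memc0 (Sinv p v) ∧ Wop p (Sinv p v) = v ∧
      (⨆ n, ‖Sinv p v n‖) ≤ (⨆ n, ‖v n‖) / (2*p - 1)) ∧
    (∀ q : ℝ, 1 ≤ q → ∀ v, memlq q v →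
      (∃ u, memlq q u ∧ Wop p u = v) ∧
      memlq q (Sinv p v) ∧ Wop p (Sinv p v) = v ∧
      (∑' n, ‖Sinv p v n‖ ^ q) ^ (1/q) ≤ (∑' n, ‖v n‖ ^ q) ^ (1/q) / (2*p - 1)) := by
  have hp0 : (0:ℝ) < p := by linarith
  constructor
  · intro v hv
    have hw := wop_sinv p hp0.ne' v
    have hmem := sinv_memc0 p hp hp1 v hv
    refine ⟨⟨Sinv p v, hmem, hw⟩, hmem, hw, ?_⟩
    have hbdd : BddAbove (Set.range fun n => ‖v n‖) := hv.norm.bddAbove_range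
    have hM : ∀ i, ‖v i‖ ≤ ⨆ n, ‖v n‖ := fun i => le_ciSup hbdd i
    exact ciSup_le fun n => bound_pointwise p hp hp1 v _ hM n
  · intro q hq v hv
    have hw := wop_sinv p hp0.ne' v
    obtain ⟨hs, hb⟩ := lq_main p hp hp1 q hq v hv
    exact ⟨⟨Sinv p v, hs, hw⟩, hs, hw, hb⟩
end

section
/- For p = 1/2, the operator W_{1/2} acting on l^1 is not supercyclic: for every y ∈ l^1, the set {λ W_{1/2}^n y : λ ∈ ℂ, n ∈ ℕ} is not dense in l^1. -/
open Filter

/-- `T` is hypercyclic on the space given by membership predicate `mem` with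
distance predicate `dlt`: some `x` in the space has dense orbit. -/
def HypercyclicOn (mem : (ℕ → ℂ) → Prop) (dlt : (ℕ → ℂ) → (ℕ → ℂ) → ℝ → Prop)
    (T : (ℕ → ℂ) → (ℕ → ℂ)) : Prop :=
  ∃ x, mem x ∧ ∀ z, mem z → ∀ ε : ℝ, 0 < ε → ∃ n : ℕ, dlt (T^[n] x) z ε

/-- `T` is frequently hypercyclic: some `x` in the space is such that for every ball
(center `z` in the space, radius `ε`), the set of times `n` with `T^[n] x` in the ball
has positive lower density. -/
def FreqHypercyclicOn (mem : (ℕ → ℂ) → Prop) (dlt : (ℕ → ℂ) → (ℕ → ℂ) → ℝ → Prop)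
    (T : (ℕ → ℂ) → (ℕ → ℂ)) : Prop :=
  ∃ x, mem x ∧ ∀ z, mem z → ∀ ε : ℝ, 0 < ε →
    0 < Filter.liminf (fun N : ℕ =>
      (({n : ℕ | dlt (T^[n] x) z ε} ∩ Set.Icc 1 N).ncard : ℝ) / (N : ℝ)) Filter.atTop

/-- `T` is Devaney chaotic: it is hypercyclic, its periodic points are dense, and it has
sensitive dependence on initial conditions. -/
def DevaneyOn (mem : (ℕ → ℂ) → Prop) (dlt : (ℕ → ℂ) → (ℕ → ℂ) → ℝ → Prop)
    (T : (ℕ → ℂ) → (ℕ → ℂ)) : Prop :=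
  HypercyclicOn mem dlt T ∧
  (∀ z, mem z → ∀ ε : ℝ, 0 < ε →
    ∃ y, mem y ∧ (∃ n : ℕ, 1 ≤ n ∧ T^[n] y = y) ∧ dlt y z ε) ∧
  (∃ δ : ℝ, 0 < δ ∧ ∀ x, mem x → ∀ ε : ℝ, 0 < ε →
    ∃ y, mem y ∧ dlt x y ε ∧ ∃ n : ℕ, ¬ dlt (T^[n] x) (T^[n] y) δ)

noncomputable def Ssum (x : ℕ → ℂ) : ℂ := ∑' i, x i

def phi (i : ℕ) : ℂ := if i % 4 = 0 ∨ i % 4 = 3 then 1 else -1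

noncomputable def Tsum (x : ℕ → ℂ) : ℂ := ∑' i, phi i * x i

lemma phi_norm (i : ℕ) : ‖phi i‖ = 1 := by
  unfold phi; split <;> simp

lemma phi_abs (i : ℕ) : ‖phi i‖ = 1 := phi_norm i

lemma summable_phi_mul {f : ℕ → ℕ} {x : ℕ → ℂ} (h : Summable fun i => ‖x i‖) :
    Summable (fun i => phi (f i) * x i) := by
  apply Summable.of_norm
  simp only [norm_mul, phi_norm, one_mul]
  exact h

lemma phi_zero : phi 0 = 1 := by simp [phi]
lemma phi_one : phi 1 = -1 := by simp [phi]
lemma phi_two : phi 2 = -1 := by simp [phi]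
lemma phi_add_two (i : ℕ) : phi (i + 2) = - phi i := by
  unfold phi
  have h : (i + 2) % 4 = (i % 4 + 2) % 4 := by omega
  have h4 : i % 4 < 4 := Nat.mod_lt _ (by norm_num)
  interval_cases hm : (i % 4) <;> simp [h, hm] <;> norm_num

lemma wop_apply (x : ℕ → ℂ) (i : ℕ) :
    Wop (1/2) x (i+1) = (1/2 : ℂ) * x i + (1/2 : ℂ) * x (i + 2) := by
  simp [Wop]; norm_num

lemma wop_zero (x : ℕ → ℂ) : Wop (1/2) x 0 = (1/2 : ℂ) * x 0 + (1/2 : ℂ) * x 1 := by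
  simp [Wop]; norm_num

lemma summable_shift2 {x : ℕ → ℂ} (hx : Summable x) : Summable (fun i => x (i + 2)) :=
  (summable_nat_add_iff 2).2 hx

lemma wop_summable {x : ℕ → ℂ} (hx : Summable x) : Summable (Wop (1/2) x) := by
  rw [← (summable_nat_add_iff 1)]
  have : (fun i => Wop (1/2) x (i + 1)) =
      fun i => (1/2 : ℂ) * x i + (1/2 : ℂ) * x (i + 2) := by
    funext i; exact wop_apply x i
  rw [this]
  exact ((hx.mul_left _).add ((summable_shift2 hx).mul_left _))

lemma tsum_shift2 {x : ℕ → ℂ} (hx : Summable x) :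
    ∑' i, x (i + 2) = (∑' i, x i) - x 0 - x 1 := by
  have h1 := Summable.tsum_eq_zero_add hx
  have h2 := Summable.tsum_eq_zero_add ((summable_nat_add_iff 1).2 hx)
  rw [h1, h2]
  have e : (fun b : ℕ => x (b + 1 + 1)) = fun b => x (b + 2) := by
    funext b; congr 1
  rw [e]
  push_cast
  ring

lemma Ssum_wop {x : ℕ → ℂ} (hx : Summable x) : Ssum (Wop (1/2) x) = Ssum x := by
  unfold Ssum
  rw [Summable.tsum_eq_zero_add (wop_summable hx)]
  have : (fun i => Wop (1/2) x (i + 1)) =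
      fun i => (1/2 : ℂ) * x i + (1/2 : ℂ) * x (i + 2) := by
    funext i; exact wop_apply x i
  rw [this, wop_zero, Summable.tsum_add (hx.mul_left _) ((summable_shift2 hx).mul_left _),
    tsum_mul_left, tsum_mul_left, tsum_shift2 hx]
  ring

lemma Tsum_wop {x : ℕ → ℂ} (hx : Summable x) : Tsum (Wop (1/2) x) = 0 := by
  classical
  set g : ℕ → ℂ := fun i => phi (i+1) * x i with hg_def
  have hxn : Summable (fun i => ‖x i‖) := summable_norm_iff.2 hx
  have hg : Summable g := summable_phi_mul hxn
  have hg2 : Summable (fun i => g (i + 2)) := (summable_nat_add_iff 2).2 hg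
  have hWsum : Summable (fun i => phi i * Wop (1/2) x i) :=
    summable_phi_mul (f := id) (summable_norm_iff.2 (wop_summable hx))
  unfold Tsum
  rw [Summable.tsum_eq_zero_add hWsum]
  have e : (fun i => phi (i+1) * Wop (1/2) x (i+1))
      = fun i => (1/2 : ℂ) * g i + (1/2 : ℂ) * (-(g (i+2))) := by
    funext i
    rw [wop_apply]
    have h2 : phi (i + 2 + 1) = - phi (i + 1) := by
      have := phi_add_two (i+1)
      rw [show i + 1 + 2 = i + 2 + 1 by ring] at this
      exact this
    simp only [hg_def, h2]
    ring
  rw [e, Summable.tsum_add (hg.mul_left _) (hg2.neg.mul_left _), tsum_mul_left, tsum_mul_left,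
    tsum_neg, tsum_shift2 hg, wop_zero, phi_zero]
  simp only [hg_def]
  rw [show (0:ℕ) + 1 = 1 by rfl, show (1:ℕ) + 1 = 2 by rfl, phi_one, phi_two]
  ring

lemma Ssum_smul (c : ℂ) (x : ℕ → ℂ) : Ssum (fun i => c * x i) = c * Ssum x :=
  tsum_mul_left

lemma Tsum_smul (c : ℂ) (x : ℕ → ℂ) : Tsum (fun i => c * x i) = c * Tsum x := by
  unfold Tsum
  rw [show (fun i => phi i * (c * x i)) = fun i => c * (phi i * x i) by
    funext i; ring]
  exact tsum_mul_left

lemma approx {x z : ℕ → ℂ} (hx : Summable x) (hz : Summable z) {ε : ℝ}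
    (h : (∑' i, ‖x i - z i‖) < ε) :
    ‖Ssum x - Ssum z‖ < ε ∧ ‖Tsum x - Tsum z‖ < ε := by
  have hd : Summable (fun i => x i - z i) := hx.sub hz
  have hdn : Summable (fun i => ‖x i - z i‖) := summable_norm_iff.2 hd
  constructor
  · have e : Ssum x - Ssum z = ∑' i, (x i - z i) := (Summable.tsum_sub hx hz).symm
    rw [e]
    exact lt_of_le_of_lt (norm_tsum_le_tsum_norm hdn) h
  · have hpdn : Summable (fun i => ‖phi i * (x i - z i)‖) := by
      simp only [norm_mul, phi_norm, one_mul]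
      exact hdn
    have hpx : Summable (fun i => phi i * x i) :=
      summable_phi_mul (f := id) (summable_norm_iff.2 hx)
    have hpz : Summable (fun i => phi i * z i) :=
      summable_phi_mul (f := id) (summable_norm_iff.2 hz)
    have e : Tsum x - Tsum z = ∑' i, phi i * (x i - z i) := by
      unfold Tsum
      rw [show (fun i => phi i * (x i - z i)) = fun i => phi i * x i - phi i * z i by
        funext i; ring]
      exact (Summable.tsum_sub hpx hpz).symm
    rw [e]
    refine lt_of_le_of_lt (le_trans (norm_tsum_le_tsum_norm hpdn) ?_) h
    apply le_of_eq
    congr 1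
    funext i
    rw [norm_mul, phi_norm, one_mul]

lemma final {u1 v1 u2 v2 : ℂ} (h1 : ‖u1 - 1‖ < 1/2) (h2 : ‖v1 - 1‖ < 1/2)
    (h3 : ‖u2 + 1‖ < 1/2) (h4 : ‖v2 - 1‖ < 1/2) (hrel : u1 * v2 = u2 * v1) : False := by
  have bre : ∀ w : ℂ, |w.re| ≤ ‖w‖ := fun w => Complex.abs_re_le_norm w
  have bim : ∀ w : ℂ, |w.im| ≤ ‖w‖ := fun w => Complex.abs_im_le_norm w
  have hu1re : |u1.re - 1| < 1/2 := lt_of_le_of_lt (by simpa using bre (u1 - 1)) h1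
  have hu1im : |u1.im| < 1/2 := lt_of_le_of_lt (by simpa using bim (u1 - 1)) h1
  have hv1re : |v1.re - 1| < 1/2 := lt_of_le_of_lt (by simpa using bre (v1 - 1)) h2
  have hv1im : |v1.im| < 1/2 := lt_of_le_of_lt (by simpa using bim (v1 - 1)) h2
  have hu2re : |u2.re + 1| < 1/2 := lt_of_le_of_lt (by simpa using bre (u2 + 1)) h3
  have hu2im : |u2.im| < 1/2 := lt_of_le_of_lt (by simpa using bim (u2 + 1)) h3
  have hv2re : |v2.re - 1| < 1/2 := lt_of_le_of_lt (by simpa using bre (v2 - 1)) h4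
  have hv2im : |v2.im| < 1/2 := lt_of_le_of_lt (by simpa using bim (v2 - 1)) h4
  rw [abs_lt] at hu1re hu1im hv1re hv1im hu2re hu2im hv2re hv2im
  have hkey : u1 * (starRingEnd ℂ) v1 * (v2 * (starRingEnd ℂ) v2)
      = u2 * (starRingEnd ℂ) v2 * (v1 * (starRingEnd ℂ) v1) := by
    linear_combination ((starRingEnd ℂ) v1 * (starRingEnd ℂ) v2) * hrel
  rw [Complex.mul_conj, Complex.mul_conj] at hkey
  have hre := congrArg Complex.re hkey
  simp only [Complex.mul_re, Complex.mul_im, Complex.conj_re, Complex.conj_im,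
    Complex.ofReal_re, Complex.ofReal_im, mul_zero, zero_mul, sub_zero] at hre
  have hA : 0 < u1.re * v1.re + u1.im * v1.im := by nlinarith
  have hB : u2.re * v2.re + u2.im * v2.im < 0 := by nlinarith
  have hn1 : 0 < Complex.normSq v1 := by
    apply Complex.normSq_pos.2
    intro h; rw [h] at hv1re; simp at hv1re; linarith
  have hn2 : 0 < Complex.normSq v2 := by
    apply Complex.normSq_pos.2
    intro h; rw [h] at hv2re; simp at hv2re; linarith
  nlinarith [hre, hA, hB, hn1, hn2]

lemma dist_one' {x z : ℕ → ℂ} {ε : ℝ} (h : distLqlt 1 x z ε) :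
    (∑' i, ‖x i - z i‖) < ε := by
  unfold distLqlt at h
  simpa [Real.rpow_one] using h

lemma memlq_single (j : ℕ) : memlq 1 (fun i => if i = j then (1:ℂ) else 0) := by
  unfold memlq
  have e : (fun n => ‖(if n = j then (1:ℂ) else 0)‖ ^ (1:ℝ))
      = fun n => if n = j then (1:ℝ) else 0 := by
    funext n; by_cases h : n = j <;> simp [h, Real.rpow_one]
  rw [e]
  apply summable_of_ne_finset_zero (s := {j})
  intro n hn
  simp only [Finset.mem_singleton] at hn
  simp [hn]


/-- For `p = 1/2`, the operator `W_{1/2}` acting on `l¹` is not supercyclic: no `y ∈ l¹`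
has projective orbit `{λ W_{1/2}^n y : λ ∈ ℂ, n ∈ ℕ}` dense in `l¹`. -/
theorem stmt14 : ¬ SupercyclicOn (memlq 1) (distLqlt 1) (Wop (1/2)) := by
  rintro ⟨y, hy, hdense⟩
  have hy1 : Summable (fun n => ‖y n‖) := by
    unfold memlq at hy
    simpa [Real.rpow_one] using hy
  have hys : Summable y := hy1.of_norm
  have hiter : ∀ n, Summable ((Wop (1/2))^[n] y) := by
    intro n; induction n with
    | zero => simpa using hys
    | succ n ih => rw [Function.iterate_succ_apply']; exact wop_summable ih
  have hSit : ∀ n, Ssum ((Wop (1/2))^[n] y) = Ssum y := by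
    intro n; induction n with
    | zero => simp
    | succ n ih => rw [Function.iterate_succ_apply', Ssum_wop (hiter n)]; exact ih
  have hTit : ∀ n, Tsum ((Wop (1/2))^[n] y) = if n = 0 then Tsum y else 0 := by
    intro n
    match n with
    | 0 => simp
    | n + 1 =>
      rw [Function.iterate_succ_apply', Tsum_wop (hiter n)]
      simp
  -- target z1 = e_0 : Ssum = 1, Tsum = 1 ; target z2 = e_1 : Ssum = 1, Tsum = -1
  set z1 : ℕ → ℂ := fun i => if i = 0 then (1:ℂ) else 0 with hz1
  set z2 : ℕ → ℂ := fun i => if i = 1 then (1:ℂ) else 0 with hz2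
  have hz1s : Summable z1 := by
    apply Summable.of_norm
    have := memlq_single 0; unfold memlq at this
    simpa [Real.rpow_one, hz1] using this
  have hz2s : Summable z2 := by
    apply Summable.of_norm
    have := memlq_single 1; unfold memlq at this
    simpa [Real.rpow_one, hz2] using this
  have hSz1 : Ssum z1 = 1 := tsum_ite_eq 0 (fun _ => (1:ℂ))
  have hSz2 : Ssum z2 = 1 := tsum_ite_eq 1 (fun _ => (1:ℂ))
  have hTz1 : Tsum z1 = 1 := by
    unfold Tsum
    have e : (fun i => phi i * z1 i) = fun i => if i = 0 then (1:ℂ) else 0 := by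
      funext i; by_cases h : i = 0 <;> simp [hz1, h, phi_zero]
    rw [e]; exact tsum_ite_eq 0 (fun _ => (1:ℂ))
  have hTz2 : Tsum z2 = -1 := by
    unfold Tsum
    have e : (fun i => phi i * z2 i) = fun i => if i = 1 then (-1:ℂ) else 0 := by
      funext i; by_cases h : i = 1 <;> simp [hz2, h, phi_one]
    rw [e]; exact tsum_ite_eq 1 (fun _ => (-1:ℂ))
  -- extract approximations
  have main : ∀ (z : ℕ → ℂ), Summable z → memlq 1 z → Ssum z = 1 → ‖Tsum z‖ = 1 →
      ∃ lam : ℂ, ‖lam * Ssum y - 1‖ < 1/2 ∧ ‖lam * Tsum y - Tsum z‖ < 1/2 := by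
    intro z hzs hzm hSz hTzn
    obtain ⟨lam, n, hd⟩ := hdense z hzm (1/2) (by norm_num)
    have horb : Summable (fun i => lam * (Wop (1/2))^[n] y i) := (hiter n).mul_left lam
    have happ := approx horb hzs (dist_one' hd)
    have hS : Ssum (fun i => lam * (Wop (1/2))^[n] y i) = lam * Ssum y := by
      rw [Ssum_smul, hSit]
    have hT : Tsum (fun i => lam * (Wop (1/2))^[n] y i)
        = lam * Tsum ((Wop (1/2))^[n] y) := Tsum_smul _ _
    rw [hS, hSz] at happ
    rw [hT] at happ
    rcases Nat.eq_zero_or_pos n with hn | hn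
    · subst hn
      refine ⟨lam, happ.1, ?_⟩
      simpa using happ.2
    · exfalso
      rw [hTit n, if_neg (Nat.pos_iff_ne_zero.1 hn)] at happ
      have h2 := happ.2
      rw [mul_zero, zero_sub, norm_neg, hTzn] at h2
      norm_num at h2
  obtain ⟨lam1, hv1, hu1⟩ := main z1 hz1s (memlq_single 0) hSz1 (by rw [hTz1]; simp)
  obtain ⟨lam2, hv2, hu2⟩ := main z2 hz2s (memlq_single 1) hSz2 (by rw [hTz2]; simp)
  rw [hTz1] at hu1
  rw [hTz2, sub_neg_eq_add] at hu2
  exact final hu1 hv1 hu2 hv2 (by ring)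
end

section
/- Let p ∈ (0,1) with p ≠ 1/2, let X be c_0(ℤ) or l^q(ℤ) for some q ≥ 1, and let λ ∈ ℂ with |λ| ≥ 1/|1−2p|. Then λ \overline{W}_p is not hypercyclic on X. In particular, for every x ∈ X and n ≥ 1 one has ‖\overline{W}_p^n x‖ ≥ |1−2p|^n ‖x‖. -/
open Filter

/-- The transition operator of the simple random walk on `ℤ` with jump probability `p`:
`(W̄_p x)_i = (1-p) x_{i-1} + p x_{i+1}` for all `i ∈ ℤ`. -/
noncomputable def WZop (p : ℝ) (x : ℤ → ℂ) : ℤ → ℂ := fun i =>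
  ((1 - p : ℝ) : ℂ) * x (i - 1) + (p : ℂ) * x (i + 1)

/-- Membership in `c₀(ℤ)`: two-sided sequences tending to `0` at infinity. -/
def memc0Z (x : ℤ → ℂ) : Prop := Filter.Tendsto x (Filter.cocompact ℤ) (nhds 0)

/-- Membership in `ℓ^q(ℤ)`: `∑_{i ∈ ℤ} ‖x i‖^q < ∞`. -/
def memlqZ (q : ℝ) (x : ℤ → ℂ) : Prop := Summable (fun i : ℤ => ‖x i‖ ^ q)

/-- Sup-norm distance between `x` and `z` is (at most) `ε`, coordinatewise strict form. -/
def distC0ltZ (x z : ℤ → ℂ) (ε : ℝ) : Prop := ∀ i, ‖x i - z i‖ < ε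

/-- The `q`-th power of the `ℓ^q(ℤ)` distance between `x` and `z` is `< ε`. -/
def distLqltZ (q : ℝ) (x z : ℤ → ℂ) (ε : ℝ) : Prop := (∑' i : ℤ, ‖x i - z i‖ ^ q) < ε

/-- `T` is hypercyclic on the space of two-sided sequences given by membership
predicate `mem` with distance predicate `dlt`. -/
def HypercyclicOnZ (mem : (ℤ → ℂ) → Prop) (dlt : (ℤ → ℂ) → (ℤ → ℂ) → ℝ → Prop)
    (T : (ℤ → ℂ) → (ℤ → ℂ)) : Prop :=
  ∃ x, mem x ∧ ∀ z, mem z → ∀ ε : ℝ, 0 < ε → ∃ n : ℕ, dlt (T^[n] x) z ε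

/-- `T` is supercyclic on the space of two-sided sequences given by membership
predicate `mem` with distance predicate `dlt`. -/
def SupercyclicOnZ (mem : (ℤ → ℂ) → Prop) (dlt : (ℤ → ℂ) → (ℤ → ℂ) → ℝ → Prop)
    (T : (ℤ → ℂ) → (ℤ → ℂ)) : Prop :=
  ∃ x, mem x ∧ ∀ z, mem z → ∀ ε : ℝ, 0 < ε →
    ∃ (lam : ℂ) (n : ℕ), dlt (fun i => lam * T^[n] x i) z ε

namespace Stmt15Aux
variable {p q : ℝ}

noncomputable def ck (p : ℝ) (m : ℕ) : ℝ := (-(p/(1-p)))^m / (1-p)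

lemma bound_W {p : ℝ} (hp0 : 0 ≤ p) (hp1 : p ≤ 1) {x : ℤ → ℂ} {C : ℝ}
    (hC : ∀ i, ‖x i‖ ≤ C) (i : ℤ) : ‖WZop p x i‖ ≤ C := by
  have h0C : 0 ≤ C := le_trans (norm_nonneg _) (hC 0)
  have h1 : ‖WZop p x i‖ ≤ ‖((1-p:ℝ):ℂ)‖ * ‖x (i-1)‖ + ‖(p:ℂ)‖ * ‖x (i+1)‖ := by
    refine (norm_add_le _ _).trans ?_
    rw [norm_mul, norm_mul]
  have h2 : ‖((1-p:ℝ):ℂ)‖ = 1 - p := by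
    rw [Complex.norm_real, Real.norm_eq_abs, abs_of_nonneg (by linarith)]
  have h3 : ‖(p:ℂ)‖ = p := by
    rw [Complex.norm_real, Real.norm_eq_abs, abs_of_nonneg hp0]
  calc ‖WZop p x i‖ ≤ (1-p) * ‖x (i-1)‖ + p * ‖x (i+1)‖ := by rw [h2, h3] at h1; exact h1
    _ ≤ (1-p) * C + p * C := by
        exact add_le_add (mul_le_mul_of_nonneg_left (hC _) (by linarith)) (mul_le_mul_of_nonneg_left (hC _) hp0)
    _ = C := by ring


lemma ha0 (hp0 : 0 < p) (hp2 : 2*p < 1) : 0 ≤ p/(1-p) :=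
  div_nonneg hp0.le (by linarith)

lemma ha1 (hp0 : 0 < p) (hp2 : 2*p < 1) : p/(1-p) < 1 :=
  (div_lt_one (by linarith)).mpr (by linarith)

lemma Ssum (hp0 : 0 < p) (hp2 : 2*p < 1) (x : ℤ → ℂ) {C : ℝ} (hC : ∀ i, ‖x i‖ ≤ C) (j : ℤ) :
    Summable (fun m : ℕ => (((-(p/(1-p)))^m : ℝ):ℂ) * x (j + 2*(m:ℤ))) := by
  apply Summable.of_norm
  refine Summable.of_nonneg_of_le (fun m => norm_nonneg _) (fun m => ?_)
    ((summable_geometric_of_lt_one (ha0 hp0 hp2) (ha1 hp0 hp2)).mul_right C)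
  rw [norm_mul, Complex.norm_real, Real.norm_eq_abs, abs_pow, abs_neg,
    abs_of_nonneg (ha0 hp0 hp2)]
  exact mul_le_mul_of_nonneg_left (hC _) (pow_nonneg (ha0 hp0 hp2) m)

lemma Speel (hp0 : 0 < p) (hp2 : 2*p < 1) (x : ℤ → ℂ) {C : ℝ} (hC : ∀ i, ‖x i‖ ≤ C) (j : ℤ) :
    (∑' m : ℕ, (((-(p/(1-p)))^m : ℝ):ℂ) * x (j + 2*(m:ℤ)))
      = x j + ((-(p/(1-p)) : ℝ) : ℂ) *
        ∑' m : ℕ, (((-(p/(1-p)))^m : ℝ):ℂ) * x ((j+2) + 2*(m:ℤ)) := by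
  rw [Summable.tsum_eq_zero_add (Ssum hp0 hp2 x hC j)]
  congr 1
  · norm_num
  · rw [← tsum_mul_left]
    congr 1
    funext m
    have harg : j + 2*((m:ℤ)+1) = (j+2) + 2*(m:ℤ) := by ring
    push_cast
    rw [harg]
    ring

/-- The key left-inverse identity. -/
lemma key (hp0 : 0 < p) (hp2 : 2*p < 1) (x : ℤ → ℂ) {C : ℝ} (hC : ∀ i, ‖x i‖ ≤ C) (i : ℤ) :
    HasSum (fun m : ℕ => ((ck p m : ℝ):ℂ) * WZop p x (i + 1 + 2*(m:ℤ))) (x i) := by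
  have hne : ((1-p:ℝ):ℂ) ≠ 0 := by
    simp only [ne_eq, Complex.ofReal_eq_zero]
    intro h; linarith
  have hfe : (fun m : ℕ => ((ck p m : ℝ):ℂ) * WZop p x (i + 1 + 2*(m:ℤ)))
      = fun m : ℕ => (((-(p/(1-p)))^m : ℝ):ℂ) * x (i + 2*(m:ℤ))
        + ((p/(1-p) : ℝ):ℂ) * ((((-(p/(1-p)))^m : ℝ):ℂ) * x ((i+2) + 2*(m:ℤ))) := by
    funext m
    have h1 : i + 1 + 2*(m:ℤ) - 1 = i + 2*(m:ℤ) := by ring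
    have h2 : i + 1 + 2*(m:ℤ) + 1 = (i + 2) + 2*(m:ℤ) := by ring
    rw [WZop, ck, h1, h2]
    have hpc : ((1:ℂ) - (p:ℂ)) ≠ 0 := by push_cast at hne; exact hne
    push_cast
    field_simp
  have hs1 := Ssum hp0 hp2 x hC i
  have hs2 := Ssum hp0 hp2 x hC (i+2)
  have hsum : Summable (fun m : ℕ => ((ck p m : ℝ):ℂ) * WZop p x (i + 1 + 2*(m:ℤ))) := by
    rw [hfe]
    exact hs1.add (hs2.mul_left _)
  rw [hsum.hasSum_iff]
  rw [hfe, Summable.tsum_add hs1 (hs2.mul_left _), tsum_mul_left]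
  rw [Speel hp0 hp2 x hC i]
  push_cast
  ring


lemma ck_abs (hp0 : 0 < p) (hp2 : 2*p < 1) (m : ℕ) :
    |ck p m| = (p/(1-p))^m / (1-p) := by
  rw [ck, abs_div, abs_pow, abs_neg, abs_of_nonneg (ha0 hp0 hp2),
    abs_of_pos (by linarith : (0:ℝ) < 1 - p)]

lemma ck_hasSum (hp0 : 0 < p) (hp2 : 2*p < 1) :
    HasSum (fun m : ℕ => |ck p m|) (1/(1-2*p)) := by
  have hne1 : (1-p) ≠ 0 := by intro h; linarith
  have hne2 : (1-2*p) ≠ 0 := by intro h; linarith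
  have h := (hasSum_geometric_of_lt_one (ha0 hp0 hp2) (ha1 hp0 hp2)).div_const (1-p)
  have h1 : (1:ℝ) - p/(1-p) = (1-2*p)/(1-p) := by field_simp; ring
  have he : (1 - p/(1-p))⁻¹ / (1-p) = 1/(1-2*p) := by
    rw [h1, inv_div]
    field_simp
  rw [show (fun m : ℕ => |ck p m|) = fun m : ℕ => (p/(1-p))^m/(1-p) from
    funext (ck_abs hp0 hp2), ← he]
  exact h

/-- pointwise bound from the key identity -/
lemma pt_bound (hp0 : 0 < p) (hp2 : 2*p < 1) (x : ℤ → ℂ) {C : ℝ} (hC : ∀ i, ‖x i‖ ≤ C)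
    {B : ℝ} (hB : ∀ j, ‖WZop p x j‖ ≤ B) (i : ℤ) :
    ‖x i‖ ≤ (1/(1-2*p)) * B := by
  have hk := key hp0 hp2 x hC i
  have hB0 : 0 ≤ B := le_trans (norm_nonneg _) (hB 0)
  have hsn : Summable (fun m : ℕ => ‖((ck p m : ℝ):ℂ) * WZop p x (i + 1 + 2*(m:ℤ))‖) := by
    refine Summable.of_nonneg_of_le (fun m => norm_nonneg _) (fun m => ?_)
      ((ck_hasSum hp0 hp2).summable.mul_right B)
    rw [norm_mul, Complex.norm_real, Real.norm_eq_abs]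
    exact mul_le_mul_of_nonneg_left (hB _) (abs_nonneg _)
  calc ‖x i‖ = ‖∑' m : ℕ, ((ck p m : ℝ):ℂ) * WZop p x (i + 1 + 2*(m:ℤ))‖ := by
        rw [hk.tsum_eq]
    _ ≤ ∑' m : ℕ, ‖((ck p m : ℝ):ℂ) * WZop p x (i + 1 + 2*(m:ℤ))‖ :=
        norm_tsum_le_tsum_norm hsn
    _ ≤ ∑' m : ℕ, |ck p m| * B := by
        refine Summable.tsum_le_tsum (fun m => ?_) hsn ((ck_hasSum hp0 hp2).summable.mul_right B)
        rw [norm_mul, Complex.norm_real, Real.norm_eq_abs]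
        exact mul_le_mul_of_nonneg_left (hB _) (abs_nonneg _)
    _ = (1/(1-2*p)) * B := by
        rw [((ck_hasSum hp0 hp2).mul_right B).tsum_eq]

/-- c0 single-step -/
lemma c0_step (hp0 : 0 < p) (hp2 : 2*p < 1) (x : ℤ → ℂ) {C : ℝ} (hC : ∀ i, ‖x i‖ ≤ C) :
    (1-2*p) * (⨆ i, ‖x i‖) ≤ ⨆ j, ‖WZop p x j‖ := by
  have h12 : (0:ℝ) < 1-2*p := by linarith
  have hBdd : BddAbove (Set.range fun j => ‖WZop p x j‖) := by
    refine ⟨C, ?_⟩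
    rintro - ⟨j, rfl⟩
    exact bound_W hp0.le (by linarith) hC j
  have hB : ∀ j, ‖WZop p x j‖ ≤ ⨆ j, ‖WZop p x j‖ := fun j => le_ciSup hBdd j
  have h1 : (⨆ i, ‖x i‖) ≤ (1/(1-2*p)) * ⨆ j, ‖WZop p x j‖ := by
    refine ciSup_le fun i => pt_bound hp0 hp2 x hC hB i
  calc (1-2*p) * (⨆ i, ‖x i‖) ≤ (1-2*p) * ((1/(1-2*p)) * ⨆ j, ‖WZop p x j‖) := by
        exact mul_le_mul_of_nonneg_left h1 h12.le
    _ = ⨆ j, ‖WZop p x j‖ := by field_simp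

lemma iter_bound (hp0 : 0 ≤ p) (hp1 : p ≤ 1) {x : ℤ → ℂ} {C : ℝ}
    (hC : ∀ i, ‖x i‖ ≤ C) (n : ℕ) (i : ℤ) : ‖(WZop p)^[n] x i‖ ≤ C := by
  induction n generalizing x with
  | zero => exact hC i
  | succ n ih =>
    rw [Function.iterate_succ_apply]
    exact ih fun j => bound_W hp0 hp1 hC j

/-- c0 iterated bound -/
lemma c0_iter (hp0 : 0 < p) (hp2 : 2*p < 1) (x : ℤ → ℂ) {C : ℝ} (hC : ∀ i, ‖x i‖ ≤ C)
    (n : ℕ) : (1-2*p)^n * (⨆ i, ‖x i‖) ≤ ⨆ i, ‖(WZop p)^[n] x i‖ := by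
  induction n generalizing x with
  | zero => simp
  | succ n ih =>
    have h12 : (0:ℝ) < 1-2*p := by linarith
    have hWC : ∀ j, ‖WZop p x j‖ ≤ C := fun j => bound_W hp0.le (by linarith) hC j
    calc (1-2*p)^(n+1) * (⨆ i, ‖x i‖) = (1-2*p)^n * ((1-2*p) * ⨆ i, ‖x i‖) := by ring
      _ ≤ (1-2*p)^n * (⨆ j, ‖WZop p x j‖) :=
          mul_le_mul_of_nonneg_left (c0_step hp0 hp2 x hC) (pow_nonneg h12.le n)
      _ ≤ ⨆ i, ‖(WZop p)^[n] (WZop p x) i‖ := ih (WZop p x) hWC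
      _ = ⨆ i, ‖(WZop p)^[n+1] x i‖ := by
          simp only [Function.iterate_succ_apply]


lemma memlq_translate (c : ℤ) {x : ℤ → ℂ} (hx : memlqZ q x) :
    memlqZ q (fun i => x (i + c)) := by
  have : (fun i : ℤ => ‖x (i + c)‖ ^ q) = (fun i : ℤ => ‖x i‖ ^ q) ∘ ⇑(Equiv.addRight c) := rfl
  rw [memlqZ, this]
  exact ((Equiv.addRight c).summable_iff).mpr hx

lemma tsum_translate (c : ℤ) (x : ℤ → ℂ) :
    (∑' i : ℤ, ‖x (i + c)‖ ^ q) = ∑' i : ℤ, ‖x i‖ ^ q :=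
  (Equiv.addRight c).tsum_eq (fun i => ‖x i‖ ^ q)

-- the P exponent
lemma hP_toReal (hq : 1 ≤ q) : (ENNReal.ofReal q).toReal = q :=
  ENNReal.toReal_ofReal (by linarith)

lemma hP_pos (hq : 1 ≤ q) : 0 < (ENNReal.ofReal q).toReal := by
  rw [hP_toReal hq]; linarith

lemma hP_one_le (hq : 1 ≤ q) : 1 ≤ ENNReal.ofReal q := by
  rw [← ENNReal.ofReal_one]
  exact ENNReal.ofReal_le_ofReal hq

lemma hP_ne_zero (hq : 1 ≤ q) : ENNReal.ofReal q ≠ 0 := by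
  intro h
  have := hP_pos hq
  rw [h] at this; simp at this

lemma memlq_iff_memℓp (hq : 1 ≤ q) (x : ℤ → ℂ) :
    memlqZ q x ↔ Memℓp x (ENNReal.ofReal q) := by
  rw [memℓp_gen_iff (hP_pos hq), hP_toReal hq, memlqZ]

lemma memlq_Wop (hq : 1 ≤ q) (hp0 : 0 < p) (hp1 : p < 1) {x : ℤ → ℂ} (hx : memlqZ q x) :
    memlqZ q (WZop p x) := by
  rw [memlq_iff_memℓp hq]
  have h1 : Memℓp (fun i : ℤ => x (i + (-1))) (ENNReal.ofReal q) :=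
    (memlq_iff_memℓp hq _).mp (memlq_translate (-1) hx)
  have h2 : Memℓp (fun i : ℤ => x (i + 1)) (ENNReal.ofReal q) :=
    (memlq_iff_memℓp hq _).mp (memlq_translate 1 hx)
  have he : WZop p x = ((1-p:ℝ):ℂ) • (fun i : ℤ => x (i + (-1))) + (p:ℂ) • fun i : ℤ => x (i + 1) := by
    funext i
    simp only [WZop, Pi.add_apply, Pi.smul_apply, smul_eq_mul, sub_eq_add_neg]
  rw [he]
  exact (h1.const_smul _).add (h2.const_smul _)

/-- ℓq single-step -/
lemma lq_step (hq : 1 ≤ q) (hp0 : 0 < p) (hp2 : 2*p < 1) {x : ℤ → ℂ} (hx : memlqZ q x) :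
    (1-2*p) * (∑' i : ℤ, ‖x i‖ ^ q) ^ (1/q) ≤ (∑' i : ℤ, ‖WZop p x i‖ ^ q) ^ (1/q) := by
  classical
  set P := ENNReal.ofReal q with hPdef
  haveI : Fact (1 ≤ P) := ⟨hP_one_le hq⟩
  have hp1 : p < 1 := by linarith
  have h12 : (0:ℝ) < 1-2*p := by linarith
  have hxM : Memℓp x P := (memlq_iff_memℓp hq x).mp hx
  have hyq : memlqZ q (WZop p x) := memlq_Wop hq hp0 hp1 hx
  have hyM : Memℓp (WZop p x) P := (memlq_iff_memℓp hq _).mp hyq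
  set y : ℤ → ℂ := WZop p x with hydef
  let X : lp (fun _ : ℤ => ℂ) P := ⟨x, hxM⟩
  let Y : lp (fun _ : ℤ => ℂ) P := ⟨y, hyM⟩
  -- translates of y
  have hTmem : ∀ m : ℕ, Memℓp (fun i : ℤ => y (i + (1 + 2*(m:ℤ)))) P := fun m =>
    (memlq_iff_memℓp hq _).mp (memlq_translate _ hyq)
  let T : ℕ → lp (fun _ : ℤ => ℂ) P := fun m => ⟨fun i => y (i + (1 + 2*(m:ℤ))), hTmem m⟩
  have hTnorm : ∀ m, ‖T m‖ = ‖Y‖ := by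
    intro m
    rw [lp.norm_eq_tsum_rpow (hP_pos hq), lp.norm_eq_tsum_rpow (hP_pos hq)]
    congr 1
    exact tsum_translate (1 + 2*(m:ℤ)) y
  let F : ℕ → lp (fun _ : ℤ => ℂ) P := fun m => ((ck p m : ℝ):ℂ) • T m
  have hFnorm : ∀ m, ‖F m‖ = |ck p m| * ‖Y‖ := by
    intro m
    rw [lp.norm_const_smul (hP_ne_zero hq), Complex.norm_real, Real.norm_eq_abs, hTnorm m]
  have hFsn : Summable (fun m => ‖F m‖) := by
    rw [show (fun m => ‖F m‖) = fun m => |ck p m| * ‖Y‖ from funext hFnorm]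
    exact (ck_hasSum hp0 hp2).summable.mul_right _
  have hFs : Summable F := Summable.of_norm hFsn
  -- the evaluation CLM
  have heval : ∀ i : ℤ, ∃ φ : lp (fun _ : ℤ => ℂ) P →L[ℂ] ℂ,
      ∀ f : lp (fun _ : ℤ => ℂ) P, φ f = f i := by
    intro i
    refine ⟨LinearMap.mkContinuous
      { toFun := fun f => f i
        map_add' := fun f g => rfl
        map_smul' := fun c f => rfl } 1
      (fun f => by rw [one_mul]; exact lp.norm_apply_le_norm (hP_ne_zero hq) f i), fun f => rfl⟩
  -- Z = X
  have hbd : ∀ i, ‖x i‖ ≤ ‖X‖ := fun i => lp.norm_apply_le_norm (hP_ne_zero hq) X i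
  have hZX : (∑' m, F m) = X := by
    apply lp.ext
    funext i
    obtain ⟨φ, hφ⟩ := heval i
    have h1 : φ (∑' m, F m) = ∑' m, φ (F m) := φ.map_tsum hFs
    have h2 : ∀ m, φ (F m) = ((ck p m : ℝ):ℂ) * y (i + 1 + 2*(m:ℤ)) := by
      intro m
      rw [hφ]
      show (((ck p m : ℝ):ℂ) • (T m : ∀ _ : ℤ, ℂ)) i = _
      simp only [Pi.smul_apply, smul_eq_mul]
      congr 2
      show y (i + (1 + 2*(m:ℤ))) = y (i + 1 + 2*(m:ℤ))
      rw [add_assoc]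
    have h3 : (∑' m, φ (F m)) = x i := by
      rw [tsum_congr h2]
      exact (key hp0 hp2 x hbd i).tsum_eq
    have := h1.trans h3
    rw [hφ] at this
    show (((∑' m, F m) : lp (fun _ : ℤ => ℂ) P) : ∀ _ : ℤ, ℂ) i = x i
    exact this
  have hnorm : ‖X‖ ≤ (1/(1-2*p)) * ‖Y‖ := by
    calc ‖X‖ = ‖∑' m, F m‖ := by rw [hZX]
      _ ≤ ∑' m, ‖F m‖ := norm_tsum_le_tsum_norm hFsn
      _ = ∑' m, |ck p m| * ‖Y‖ := by rw [show (fun m => ‖F m‖) = fun m => |ck p m| * ‖Y‖ from funext hFnorm]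
      _ = (1/(1-2*p)) * ‖Y‖ := ((ck_hasSum hp0 hp2).mul_right _).tsum_eq
  have hXn : ‖X‖ = (∑' i : ℤ, ‖x i‖ ^ q) ^ (1/q) := by
    rw [lp.norm_eq_tsum_rpow (hP_pos hq), hP_toReal hq]
  have hYn : ‖Y‖ = (∑' i : ℤ, ‖WZop p x i‖ ^ q) ^ (1/q) := by
    rw [lp.norm_eq_tsum_rpow (hP_pos hq), hP_toReal hq]
  rw [hXn, hYn] at hnorm
  calc (1-2*p) * (∑' i : ℤ, ‖x i‖ ^ q) ^ (1/q)
      ≤ (1-2*p) * ((1/(1-2*p)) * (∑' i : ℤ, ‖WZop p x i‖ ^ q) ^ (1/q)) :=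
        mul_le_mul_of_nonneg_left hnorm h12.le
    _ = (∑' i : ℤ, ‖WZop p x i‖ ^ q) ^ (1/q) := by field_simp


/-- ℓq iterated bound -/
lemma lq_iter (hq : 1 ≤ q) (hp0 : 0 < p) (hp2 : 2*p < 1) {x : ℤ → ℂ} (hx : memlqZ q x)
    (n : ℕ) : memlqZ q ((WZop p)^[n] x) ∧
      (1-2*p)^n * (∑' i : ℤ, ‖x i‖ ^ q) ^ (1/q) ≤ (∑' i : ℤ, ‖(WZop p)^[n] x i‖ ^ q) ^ (1/q) := by
  induction n generalizing x with
  | zero => exact ⟨hx, by simp⟩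
  | succ n ih =>
    have hp1 : p < 1 := by linarith
    have h12 : (0:ℝ) < 1-2*p := by linarith
    have hy : memlqZ q (WZop p x) := memlq_Wop hq hp0 hp1 hx
    obtain ⟨hmem, hineq⟩ := ih hy
    refine ⟨by rw [Function.iterate_succ_apply]; exact hmem, ?_⟩
    calc (1-2*p)^(n+1) * (∑' i : ℤ, ‖x i‖ ^ q) ^ (1/q)
        = (1-2*p)^n * ((1-2*p) * (∑' i : ℤ, ‖x i‖ ^ q) ^ (1/q)) := by ring
      _ ≤ (1-2*p)^n * (∑' i : ℤ, ‖WZop p x i‖ ^ q) ^ (1/q) :=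
          mul_le_mul_of_nonneg_left (lq_step hq hp0 hp2 hx) (pow_nonneg h12.le n)
      _ ≤ (∑' i : ℤ, ‖(WZop p)^[n] (WZop p x) i‖ ^ q) ^ (1/q) := hineq
      _ = (∑' i : ℤ, ‖(WZop p)^[n+1] x i‖ ^ q) ^ (1/q) := by
          simp only [Function.iterate_succ_apply]

/-- reflection -/
def reflZ (x : ℤ → ℂ) : ℤ → ℂ := fun i => x (-i)

lemma WZ_refl (x : ℤ → ℂ) : WZop (1-p) (reflZ x) = reflZ (WZop p x) := by
  funext i
  simp only [WZop, reflZ]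
  rw [show -(i-1) = -i+1 by ring, show -(i+1) = -i-1 by ring]
  push_cast
  ring

lemma WZ_refl_iter (x : ℤ → ℂ) (n : ℕ) :
    (WZop (1-p))^[n] (reflZ x) = reflZ ((WZop p)^[n] x) := by
  induction n with
  | zero => rfl
  | succ n ih =>
    rw [Function.iterate_succ_apply', Function.iterate_succ_apply', ih, WZ_refl]

lemma refl_sup (x : ℤ → ℂ) : (⨆ i, ‖reflZ x i‖) = ⨆ i, ‖x i‖ :=
  (Equiv.neg ℤ).surjective.iSup_comp (fun j => ‖x j‖)

lemma refl_tsum (x : ℤ → ℂ) : (∑' i : ℤ, ‖reflZ x i‖ ^ q) = ∑' i : ℤ, ‖x i‖ ^ q :=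
  (Equiv.neg ℤ).tsum_eq (fun i => ‖x i‖ ^ q)

lemma refl_memlq {x : ℤ → ℂ} (hx : memlqZ q x) : memlqZ q (reflZ x) := by
  have : (fun i : ℤ => ‖reflZ x i‖ ^ q) = (fun i : ℤ => ‖x i‖ ^ q) ∘ ⇑(Equiv.neg ℤ) := rfl
  rw [memlqZ, this]
  exact ((Equiv.neg ℤ).summable_iff).mpr hx

/-- boundedness from c0 membership -/
lemma c0_bounded {x : ℤ → ℂ} (hx : memc0Z x) : ∃ C, ∀ i, ‖x i‖ ≤ C := by
  rw [memc0Z, cocompact_eq_cofinite] at hx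
  have h := hx.norm
  rw [norm_zero] at h
  have h1 : ∀ᶠ i in cofinite, ‖x i‖ < 1 := h.eventually_lt_const one_pos
  rw [Filter.eventually_cofinite] at h1
  refine ⟨1 + ∑ i ∈ h1.toFinset, ‖x i‖, fun i => ?_⟩
  by_cases hi : ‖x i‖ < 1
  · have : 0 ≤ ∑ i ∈ h1.toFinset, ‖x i‖ := Finset.sum_nonneg fun j _ => norm_nonneg _
    linarith
  · have hmem : i ∈ h1.toFinset := by simpa using hi
    have := Finset.single_le_sum (fun j _ => norm_nonneg (x j)) hmem
    linarith

/-- boundedness from lq membership -/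
lemma lq_bounded (hq : 1 ≤ q) {x : ℤ → ℂ} (hx : memlqZ q x) : ∃ C, ∀ i, ‖x i‖ ≤ C := by
  haveI : Fact (1 ≤ ENNReal.ofReal q) := ⟨hP_one_le hq⟩
  have hxM : Memℓp x (ENNReal.ofReal q) := (memlq_iff_memℓp hq x).mp hx
  exact ⟨‖(⟨x, hxM⟩ : lp (fun _ : ℤ => ℂ) (ENNReal.ofReal q))‖,
    fun i => by
      simpa using lp.norm_apply_le_norm (hP_ne_zero hq)
        (⟨x, hxM⟩ : lp (fun _ : ℤ => ℂ) (ENNReal.ofReal q)) i⟩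

/-- scalar iteration -/
lemma T_iter (p : ℝ) (lam : ℂ) (x : ℤ → ℂ) (n : ℕ) :
    (fun x i => lam * WZop p x i)^[n] x = fun i => lam^n * (WZop p)^[n] x i := by
  induction n with
  | zero => simp
  | succ n ih =>
    rw [Function.iterate_succ_apply', ih]
    funext i
    show lam * WZop p (fun i => lam ^ n * (WZop p)^[n] x i) i = _
    have hsc : WZop p (fun i => lam ^ n * (WZop p)^[n] x i) i
        = lam ^ n * WZop p ((WZop p)^[n] x) i := by
      simp only [WZop]; ring
    rw [hsc, Function.iterate_succ_apply']
    ring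


end Stmt15Aux

/-- For `p ∈ (0,1)`, `p ≠ 1/2`, and `λ ∈ ℂ` with `|λ| ≥ 1/|1-2p|`, the operator
`λ W̄_p` is not hypercyclic on `c₀(ℤ)` nor on any `ℓ^q(ℤ)`, `q ≥ 1`.  In particular,
for every `x` in the space and `n ≥ 1`, `‖W̄_p^n x‖ ≥ |1-2p|^n ‖x‖`. -/
theorem stmt15 (p : ℝ) (hp0 : 0 < p) (hp1 : p < 1) (hne : p ≠ 1/2)
    (lam : ℂ) (hlam : 1 / |1 - 2*p| ≤ ‖lam‖) :
    (¬ HypercyclicOnZ memc0Z distC0ltZ (fun x i => lam * WZop p x i)) ∧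
    (∀ q : ℝ, 1 ≤ q →
      ¬ HypercyclicOnZ (memlqZ q) (distLqltZ q) (fun x i => lam * WZop p x i)) ∧
    (∀ x : ℤ → ℂ, memc0Z x → ∀ n : ℕ, 1 ≤ n →
      |1 - 2*p| ^ n * (⨆ i, ‖x i‖) ≤ ⨆ i, ‖(WZop p)^[n] x i‖) ∧
    (∀ q : ℝ, 1 ≤ q → ∀ x : ℤ → ℂ, memlqZ q x → ∀ n : ℕ, 1 ≤ n →
      |1 - 2*p| ^ n * (∑' i : ℤ, ‖x i‖ ^ q) ^ (1/q) ≤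
        (∑' i : ℤ, ‖(WZop p)^[n] x i‖ ^ q) ^ (1/q)) := by
  classical
  have hDne : (1 - 2*p) ≠ 0 := fun h => hne (by linarith)
  have hD0 : (0:ℝ) < |1 - 2*p| := abs_pos.mpr hDne
  have hlamD : 1 ≤ ‖lam‖ * |1 - 2*p| := by
    rw [div_le_iff₀ hD0] at hlam; exact hlam
  have hlam_pos : 0 < ‖lam‖ := by
    by_contra h
    push_neg at h
    nlinarith [hD0]
  -- unified sup bound
  have hsup : ∀ (x : ℤ → ℂ) (C : ℝ), (∀ i, ‖x i‖ ≤ C) → ∀ n : ℕ,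
      |1 - 2*p|^n * (⨆ i, ‖x i‖) ≤ ⨆ i, ‖(WZop p)^[n] x i‖ := by
    intro x C hC n
    rcases lt_or_gt_of_ne hne with h | h
    · rw [abs_of_pos (by linarith : (0:ℝ) < 1 - 2*p)]
      exact Stmt15Aux.c0_iter hp0 (by linarith) x hC n
    · have h1 := Stmt15Aux.c0_iter (p := 1-p) (by linarith) (by linarith)
        (Stmt15Aux.reflZ x) (C := C) (fun i => hC (-i)) n
      rw [Stmt15Aux.WZ_refl_iter, Stmt15Aux.refl_sup, Stmt15Aux.refl_sup] at h1
      rw [show |1 - 2*p| = 1 - 2*(1-p) by rw [abs_of_neg (by linarith : 1 - 2*p < 0)]; ring]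
      exact h1
  -- unified lq bound
  have hlq : ∀ q : ℝ, 1 ≤ q → ∀ (x : ℤ → ℂ), memlqZ q x → ∀ n : ℕ,
      |1 - 2*p|^n * (∑' i : ℤ, ‖x i‖^q)^(1/q) ≤ (∑' i : ℤ, ‖(WZop p)^[n] x i‖^q)^(1/q) := by
    intro q hq x hx n
    rcases lt_or_gt_of_ne hne with h | h
    · rw [abs_of_pos (by linarith : (0:ℝ) < 1 - 2*p)]
      exact (Stmt15Aux.lq_iter hq hp0 (by linarith) hx n).2
    · have h1 := (Stmt15Aux.lq_iter (p := 1-p) hq (by linarith) (by linarith)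
        (Stmt15Aux.refl_memlq hx) n).2
      rw [Stmt15Aux.WZ_refl_iter, Stmt15Aux.refl_tsum, Stmt15Aux.refl_tsum] at h1
      rw [show |1 - 2*p| = 1 - 2*(1-p) by rw [abs_of_neg (by linarith : 1 - 2*p < 0)]; ring]
      exact h1
  refine ⟨?_, ?_, fun x hx n _ => hsup x (Stmt15Aux.c0_bounded hx).choose
      (Stmt15Aux.c0_bounded hx).choose_spec n,
    fun q hq x hx n _ => hlq q hq x hx n⟩
  -- c0 not hypercyclic
  · rintro ⟨x, hxmem, hdense⟩
    by_cases hx0 : ∀ i, x i = 0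
    · set dz : ℤ → ℂ := fun i => if i = 0 then 1 else 0 with hdz
      have hdzmem : memc0Z dz := by
        rw [memc0Z, cocompact_eq_cofinite]
        have hev : ∀ᶠ i in (cofinite : Filter ℤ), dz i = 0 := by
          rw [Filter.eventually_cofinite]
          refine (Set.finite_singleton 0).subset fun i hi => ?_
          by_contra h0
          have : i ≠ 0 := by simpa using h0
          exact hi (by simp [hdz, this])
        exact tendsto_const_nhds.congr' ((hev.mono fun i h => h.symm) :
          (fun _ : ℤ => (0:ℂ)) =ᶠ[cofinite] dz)
      obtain ⟨n, hn⟩ := hdense dz hdzmem (1/2) (by norm_num)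
      have hxe : x = fun _ => (0:ℂ) := funext hx0
      have hfix : (fun (x : ℤ → ℂ) i => lam * WZop p x i) (fun _ => (0:ℂ)) = fun _ => 0 := by
        funext i; simp [WZop]
      rw [hxe, Function.iterate_fixed hfix] at hn
      have h0 := hn 0
      simp [hdz] at h0
      norm_num at h0
    · push_neg at hx0
      obtain ⟨i0, hi0⟩ := hx0
      obtain ⟨C, hC⟩ := Stmt15Aux.c0_bounded hxmem
      have hxi0 : 0 < ‖x i0‖ := norm_pos_iff.mpr hi0
      obtain ⟨n, hn⟩ := hdense (fun _ => 0) tendsto_const_nhds (‖x i0‖/2) (by positivity)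
      rw [Stmt15Aux.T_iter] at hn
      have hL : (0:ℝ) < ‖lam‖^n := pow_pos hlam_pos n
      have hWn : ∀ i, ‖(WZop p)^[n] x i‖ ≤ (‖x i0‖/2) / ‖lam‖^n := by
        intro i
        have h := hn i
        simp only [sub_zero, norm_mul, norm_pow] at h
        rw [le_div_iff₀ hL]
        calc ‖(WZop p)^[n] x i‖ * ‖lam‖^n = ‖lam‖^n * ‖(WZop p)^[n] x i‖ := by ring
          _ ≤ ‖x i0‖/2 := h.le
      have hsupW : (⨆ i, ‖(WZop p)^[n] x i‖) ≤ (‖x i0‖/2) / ‖lam‖^n := ciSup_le hWn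
      have h1 : ‖x i0‖ ≤ ⨆ i, ‖x i‖ :=
        le_ciSup ⟨C, by rintro - ⟨i, rfl⟩; exact hC i⟩ i0
      have h2 : |1 - 2*p|^n * ‖x i0‖ ≤ (‖x i0‖/2) / ‖lam‖^n :=
        le_trans (mul_le_mul_of_nonneg_left h1 (pow_nonneg hD0.le n))
          ((hsup x C hC n).trans hsupW)
      rw [le_div_iff₀ hL] at h2
      have h4 : 1 ≤ ‖lam‖^n * |1 - 2*p|^n := by
        rw [← mul_pow, mul_comm ‖lam‖]
        rw [mul_comm] at hlamD
        exact one_le_pow₀ hlamD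
      have h5 : ‖x i0‖ ≤ ‖x i0‖/2 := by
        calc ‖x i0‖ = 1 * ‖x i0‖ := (one_mul _).symm
          _ ≤ (‖lam‖^n * |1 - 2*p|^n) * ‖x i0‖ := mul_le_mul_of_nonneg_right h4 hxi0.le
          _ = |1 - 2*p|^n * ‖x i0‖ * ‖lam‖^n := by ring
          _ ≤ ‖x i0‖/2 := h2
      linarith
  -- lq not hypercyclic
  · intro q hq
    rintro ⟨x, hxmem, hdense⟩
    have hq0 : (0:ℝ) < q := by linarith
    by_cases hx0 : ∀ i, x i = 0
    · set dz : ℤ → ℂ := fun i => if i = 0 then 1 else 0 with hdz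
      have hdzmem : memlqZ q dz := by
        have he : (fun i : ℤ => ‖dz i‖^q) = fun i : ℤ => if i = 0 then (1:ℝ) else 0 := by
          funext i
          by_cases h0 : i = 0
          · simp [hdz, h0, Real.one_rpow]
          · simp [hdz, h0, Real.zero_rpow hq0.ne']
        rw [memlqZ, he]
        exact summable_of_ne_finset_zero (s := {(0:ℤ)}) (fun i hi => if_neg (by simpa using hi))
      obtain ⟨n, hn⟩ := hdense dz hdzmem (1/2) (by norm_num)
      have hxe : x = fun _ => (0:ℂ) := funext hx0
      have hfix : (fun (x : ℤ → ℂ) i => lam * WZop p x i) (fun _ => (0:ℂ)) = fun _ => 0 := by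
        funext i; simp [WZop]
      rw [hxe, Function.iterate_fixed hfix] at hn
      simp only [distLqltZ] at hn
      have h1 : (∑' i : ℤ, ‖(fun _ : ℤ => (0:ℂ)) i - dz i‖ ^ q)
          = ∑' i : ℤ, if i = 0 then (1:ℝ) else 0 := by
        refine tsum_congr fun i => ?_
        by_cases h0 : i = 0 <;>
          simp [hdz, h0, Real.one_rpow, Real.zero_rpow hq0.ne']
      rw [h1, tsum_ite_eq] at hn
      norm_num at hn
    · push_neg at hx0
      obtain ⟨i0, hi0⟩ := hx0
      set S := ∑' i : ℤ, ‖x i‖^q with hSdef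
      have hS0 : 0 < S :=
        lt_of_lt_of_le (Real.rpow_pos_of_pos (norm_pos_iff.mpr hi0) q)
          (Summable.le_tsum hxmem i0 fun j _ => Real.rpow_nonneg (norm_nonneg _) q)
      have hzmem : memlqZ q (fun _ : ℤ => (0:ℂ)) := by
        rw [memlqZ]
        exact summable_zero.congr fun i => by simp [Real.zero_rpow hq0.ne']
      obtain ⟨n, hn⟩ := hdense _ hzmem (S/2) (by positivity)
      rw [Stmt15Aux.T_iter] at hn
      simp only [distLqltZ] at hn
      have hR0 : (0:ℝ) ≤ ∑' i : ℤ, ‖(WZop p)^[n] x i‖^q :=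
        tsum_nonneg fun i => Real.rpow_nonneg (norm_nonneg _) _
      set R := ∑' i : ℤ, ‖(WZop p)^[n] x i‖^q with hRdef
      have h1 : (∑' i : ℤ, ‖(fun i => lam^n * (WZop p)^[n] x i) i - (fun _ : ℤ => (0:ℂ)) i‖^q)
          = (‖lam‖^n)^q * R := by
        rw [hRdef, ← tsum_mul_left]
        refine tsum_congr fun i => ?_
        simp only [sub_zero, norm_mul, norm_pow]
        rw [Real.mul_rpow (by positivity) (norm_nonneg _)]
      rw [h1] at hn
      have hmain := hlq q hq x hxmem n
      have hSnn : (0:ℝ) ≤ S := hS0.le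
      have hSq : ((S)^(1/q))^q = S := by
        rw [← Real.rpow_mul hSnn, one_div_mul_cancel hq0.ne', Real.rpow_one]
      have hRq : ((R)^(1/q))^q = R := by
        rw [← Real.rpow_mul hR0, one_div_mul_cancel hq0.ne', Real.rpow_one]
      have h2 : (|1 - 2*p|^n)^q * S ≤ R := by
        have h := Real.rpow_le_rpow (by positivity) hmain hq0.le
        rw [Real.mul_rpow (by positivity) (Real.rpow_nonneg hSnn _), hSq, hRq] at h
        exact h
      have h4 : 1 ≤ ‖lam‖^n * |1 - 2*p|^n := by
        rw [← mul_pow, mul_comm ‖lam‖]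
        rw [mul_comm] at hlamD
        exact one_le_pow₀ hlamD
      have h5 : S ≤ (‖lam‖^n)^q * R := by
        calc S = 1 * S := (one_mul _).symm
          _ ≤ ((‖lam‖^n * |1 - 2*p|^n))^q * S :=
              mul_le_mul_of_nonneg_right (Real.one_le_rpow h4 hq0.le) hSnn
          _ = (‖lam‖^n)^q * ((|1 - 2*p|^n)^q * S) := by
              rw [Real.mul_rpow (by positivity) (by positivity)]; ring
          _ ≤ (‖lam‖^n)^q * R :=
              mul_le_mul_of_nonneg_left h2 (Real.rpow_nonneg (by positivity) _)
      linarith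
end
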